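/- arXiv:2411.16015 — 5 statements merged into one kernel-verified Lean document; each statement's English description precedes it below -/
import Mathlib

section
/- Let A ∈ ℝ^{m×n} have full row rank, let x ∈ ℝⁿ with x > 0, set M_X = AX²Aᵀ and λ_x = λ_min(M_X) > 0. Then for any β ≤ 1 and any Δx ∈ ℝⁿ with ‖Δx‖ ≤ (√λ_x / ‖A‖)·β, writing ΔX = diag(Δx), one has (1 − β)²·I ⪯ M_X^{−1/2} (M_{X+ΔX}) M_X^{−1/2} ⪯ (1 + β)²·I; moreover, if β < 1, then M_{X+ΔX} is positive definite and κ(M_X^{−1/2} (M_{X+ΔX}) M_X^{−1/2}) ≤ ((1 + β)/(1 − β))². -/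
open Matrix

noncomputable def euclNorm {ι : Type*} [Fintype ι] (v : ι → ℝ) : ℝ :=
  Real.sqrt (∑ i, (v i) ^ 2)

noncomputable def opNorm {ι κ : Type*} [Fintype ι] [Fintype κ]
    (M : Matrix ι κ ℝ) : ℝ :=
  sSup {r : ℝ | ∃ v : κ → ℝ, euclNorm v ≤ 1 ∧ r = euclNorm (M *ᵥ v)}

noncomputable def lambdaMin {ι : Type*} [Fintype ι] (M : Matrix ι ι ℝ) : ℝ :=
  sInf {r : ℝ | ∃ v : ι → ℝ, euclNorm v = 1 ∧ r = v ⬝ᵥ (M *ᵥ v)}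

noncomputable def lambdaMax {ι : Type*} [Fintype ι] (M : Matrix ι ι ℝ) : ℝ :=
  sSup {r : ℝ | ∃ v : ι → ℝ, euclNorm v = 1 ∧ r = v ⬝ᵥ (M *ᵥ v)}

noncomputable def condNum {ι : Type*} [Fintype ι] (M : Matrix ι ι ℝ) : ℝ :=
  lambdaMax M / lambdaMin M

noncomputable def gradProj {m n : ℕ} (B : Matrix (Fin m) (Fin n) ℝ) :
    Matrix (Fin n) (Fin n) ℝ :=
  1 - Bᵀ * (B * Bᵀ)⁻¹ * B

/-- The proximity measure `δ(x, μ) = ‖P_{AX}((1/μ) X c - e)‖`. -/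
noncomputable def prox {m n : ℕ} (A : Matrix (Fin m) (Fin n) ℝ)
    (c x : Fin n → ℝ) (μ : ℝ) : ℝ :=
  euclNorm (gradProj (A * Matrix.diagonal x) *ᵥ (μ⁻¹ • (Matrix.diagonal x *ᵥ c) - 1))

/-- The proximity measure as `min_{(y,s) ∈ F_d} ‖(1/μ) X s - e‖`. -/
noncomputable def proxMin {m n : ℕ} (A : Matrix (Fin m) (Fin n) ℝ)
    (c x : Fin n → ℝ) (μ : ℝ) : ℝ :=
  sInf {r : ℝ | ∃ (y : Fin m → ℝ) (s : Fin n → ℝ),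
    Aᵀ *ᵥ y + s = c ∧ (∀ i, 0 ≤ s i) ∧
    r = euclNorm (μ⁻¹ • (Matrix.diagonal x *ᵥ s) - 1)}

/-- The primal normal matrix `A X² Aᵀ` is positive semidefinite. -/
theorem normalPSD {m n : ℕ} (A : Matrix (Fin m) (Fin n) ℝ) (x : Fin n → ℝ) :
    (A * Matrix.diagonal x ^ 2 * Aᵀ).PosSemidef := by
  have h : A * Matrix.diagonal x ^ 2 * Aᵀ
      = (A * Matrix.diagonal x) * (A * Matrix.diagonal x)ᴴ := by
    rw [Matrix.conjTranspose_mul, Matrix.conjTranspose_eq_transpose_of_trivial,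
      Matrix.conjTranspose_eq_transpose_of_trivial, Matrix.diagonal_transpose, pow_two,
      Matrix.mul_assoc, Matrix.mul_assoc, Matrix.mul_assoc]
  rw [h]
  exact Matrix.posSemidef_self_mul_conjTranspose _

/-- The positive semidefinite square root of a positive semidefinite matrix
(as defined in Mathlib of December 2024, since removed). -/
noncomputable def Matrix.PosSemidef.sqrt {n : Type*} [Fintype n] [DecidableEq n]
    {A : Matrix n n ℝ} (hA : A.PosSemidef) : Matrix n n ℝ :=
  hA.1.eigenvectorUnitary.1 * diagonal ((↑) ∘ (Real.sqrt ∘ hA.1.eigenvalues)) *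
  (star hA.1.eigenvectorUnitary : Matrix n n ℝ)

lemma euclNorm_eq_norm {ι : Type*} [Fintype ι] (v : ι → ℝ) :
    euclNorm v = ‖(WithLp.equiv 2 (ι → ℝ)).symm v‖ := by
  rw [EuclideanSpace.norm_eq]
  simp [euclNorm, Real.norm_eq_abs, sq_abs]

lemma euclNorm_nonneg' {ι : Type*} [Fintype ι] (v : ι → ℝ) : 0 ≤ euclNorm v :=
  Real.sqrt_nonneg _

lemma euclNorm_sq {ι : Type*} [Fintype ι] (v : ι → ℝ) : euclNorm v ^ 2 = ∑ i, v i ^ 2 :=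
  Real.sq_sqrt (Finset.sum_nonneg fun _ _ => sq_nonneg _)

lemma euclNorm_eq_zero {ι : Type*} [Fintype ι] {v : ι → ℝ} : euclNorm v = 0 ↔ v = 0 := by
  unfold euclNorm
  rw [Real.sqrt_eq_zero (Finset.sum_nonneg fun _ _ => sq_nonneg _)]
  constructor
  · intro h
    funext i
    have := (Finset.sum_eq_zero_iff_of_nonneg (fun i _ => sq_nonneg (v i))).mp h i
      (Finset.mem_univ i)
    exact pow_eq_zero_iff (two_ne_zero) |>.mp this
  · intro h; subst h; simp

lemma euclNorm_smul' {ι : Type*} [Fintype ι] (c : ℝ) (v : ι → ℝ) :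
    euclNorm (c • v) = |c| * euclNorm v := by
  rw [euclNorm_eq_norm, euclNorm_eq_norm, ← Real.norm_eq_abs, ← norm_smul]
  congr 1

lemma euclNorm_triangle {ι : Type*} [Fintype ι] (v w : ι → ℝ) :
    euclNorm (v + w) ≤ euclNorm v + euclNorm w := by
  simp only [euclNorm_eq_norm]
  have h : (WithLp.equiv 2 (ι → ℝ)).symm (v + w)
      = (WithLp.equiv 2 (ι → ℝ)).symm v + (WithLp.equiv 2 (ι → ℝ)).symm w := by simp
  rw [h]
  exact norm_add_le _ _

lemma euclNorm_sub_le_add {ι : Type*} [Fintype ι] (v w : ι → ℝ) :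
    euclNorm v - euclNorm w ≤ euclNorm (v + w) := by
  simp only [euclNorm_eq_norm]
  set a := (WithLp.equiv 2 (ι → ℝ)).symm v with ha
  set b := (WithLp.equiv 2 (ι → ℝ)).symm w with hb
  have hab : (WithLp.equiv 2 (ι → ℝ)).symm (v + w) = a + b := by simp [ha, hb]
  rw [hab]
  have key : ‖a‖ ≤ ‖a + b‖ + ‖b‖ := by
    calc ‖a‖ = ‖(a + b) - b‖ := by congr 1; abel
    _ ≤ ‖a + b‖ + ‖b‖ := norm_sub_le _ _
  linarith

lemma dotProduct_le_enorm {ι : Type*} [Fintype ι] (v w : ι → ℝ) :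
    v ⬝ᵥ w ≤ euclNorm v * euclNorm w := by
  simp only [euclNorm_eq_norm]
  have h := real_inner_le_norm ((WithLp.equiv 2 (ι → ℝ)).symm v) ((WithLp.equiv 2 (ι → ℝ)).symm w)
  convert h using 1
  simp [dotProduct, PiLp.inner_apply, RCLike.inner_apply, mul_comm]

lemma euclNorm_le_of_sq_le_sq {ι : Type*} [Fintype ι] {v : ι → ℝ} {c : ℝ} (hc : 0 ≤ c)
    (h : ∑ i, v i ^ 2 ≤ c ^ 2) : euclNorm v ≤ c := by
  rw [← Real.sqrt_sq hc]
  exact Real.sqrt_le_sqrt h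

lemma euclNorm_mul_le {ι : Type*} [Fintype ι] (a b : ι → ℝ) :
    euclNorm (fun i => a i * b i) ≤ euclNorm a * euclNorm b := by
  apply euclNorm_le_of_sq_le_sq (mul_nonneg (euclNorm_nonneg' a) (euclNorm_nonneg' b))
  rw [mul_pow, euclNorm_sq, euclNorm_sq]
  calc ∑ i, (a i * b i) ^ 2 = ∑ i, a i ^ 2 * b i ^ 2 := by
        exact Finset.sum_congr rfl fun i _ => by ring
  _ ≤ ∑ i, a i ^ 2 * ∑ j, b j ^ 2 := Finset.sum_le_sum fun i _ =>
        mul_le_mul_of_nonneg_left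
          (Finset.single_le_sum (fun j _ => sq_nonneg (b j)) (Finset.mem_univ i))
          (sq_nonneg _)
  _ = (∑ i, a i ^ 2) * ∑ j, b j ^ 2 := by rw [← Finset.sum_mul]

lemma opNorm_bddAbove {ι κ : Type*} [Fintype ι] [Fintype κ] (M : Matrix ι κ ℝ) :
    BddAbove {r : ℝ | ∃ v : κ → ℝ, euclNorm v ≤ 1 ∧ r = euclNorm (M *ᵥ v)} := by
  refine ⟨Real.sqrt (∑ i, ∑ j, M i j ^ 2), ?_⟩
  rintro r ⟨v, hv, rfl⟩
  have h1 : ∀ i, (M *ᵥ v) i ^ 2 ≤ (∑ j, M i j ^ 2) * (∑ j, v j ^ 2) := fun i =>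
    Finset.sum_mul_sq_le_sq_mul_sq Finset.univ (fun j => M i j) v
  have hv2 : ∑ j, v j ^ 2 ≤ 1 := by
    have := euclNorm_sq v
    nlinarith [euclNorm_nonneg' v]
  have h2 : ∑ i, (M *ᵥ v) i ^ 2 ≤ ∑ i, ∑ j, M i j ^ 2 := by
    calc ∑ i, (M *ᵥ v) i ^ 2 ≤ ∑ i, (∑ j, M i j ^ 2) * (∑ j, v j ^ 2) :=
          Finset.sum_le_sum fun i _ => h1 i
    _ ≤ ∑ i, (∑ j, M i j ^ 2) * 1 := Finset.sum_le_sum fun i _ =>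
          mul_le_mul_of_nonneg_left hv2 (Finset.sum_nonneg fun j _ => sq_nonneg _)
    _ = ∑ i, ∑ j, M i j ^ 2 := by simp
  exact Real.sqrt_le_sqrt h2

lemma opNorm_nonneg {ι κ : Type*} [Fintype ι] [Fintype κ] (M : Matrix ι κ ℝ) :
    0 ≤ opNorm M := by
  have h : (0 : ℝ) ∈ {r : ℝ | ∃ v : κ → ℝ, euclNorm v ≤ 1 ∧ r = euclNorm (M *ᵥ v)} :=
    ⟨0, by simp [euclNorm_eq_zero.mpr rfl], by simp [euclNorm_eq_zero.mpr rfl]⟩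
  exact le_csSup (opNorm_bddAbove M) h

lemma euclNorm_mulVec_le {ι κ : Type*} [Fintype ι] [Fintype κ] (M : Matrix ι κ ℝ)
    (v : κ → ℝ) : euclNorm (M *ᵥ v) ≤ opNorm M * euclNorm v := by
  rcases eq_or_ne v 0 with rfl | hv
  · simp [euclNorm_eq_zero.mpr rfl, mul_zero, euclNorm_eq_zero.mpr (rfl : (0:ι→ℝ) = 0)]
  · have hvn : 0 < euclNorm v := lt_of_le_of_ne (euclNorm_nonneg' v)
      (fun h => hv (euclNorm_eq_zero.mp h.symm))
    set u : κ → ℝ := (euclNorm v)⁻¹ • v with hu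
    have hun : euclNorm u = 1 := by
      rw [hu, euclNorm_smul', abs_of_pos (inv_pos.mpr hvn), inv_mul_cancel₀ hvn.ne']
    have hmem : euclNorm (M *ᵥ u) ∈ {r : ℝ | ∃ v : κ → ℝ, euclNorm v ≤ 1 ∧ r = euclNorm (M *ᵥ v)} :=
      ⟨u, le_of_eq hun, rfl⟩
    have h1 : euclNorm (M *ᵥ u) ≤ opNorm M := le_csSup (opNorm_bddAbove M) hmem
    have h2 : M *ᵥ v = euclNorm v • (M *ᵥ u) := by
      rw [hu, mulVec_smul, smul_smul, mul_inv_cancel₀ hvn.ne', one_smul]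
    rw [h2, euclNorm_smul', abs_of_pos hvn, mul_comm]
    exact mul_le_mul_of_nonneg_right h1 (le_of_lt hvn)

lemma euclNorm_transpose_mulVec_le {ι κ : Type*} [Fintype ι] [Fintype κ]
    (M : Matrix ι κ ℝ) (w : ι → ℝ) : euclNorm (Mᵀ *ᵥ w) ≤ opNorm M * euclNorm w := by
  rcases eq_or_ne (euclNorm (Mᵀ *ᵥ w)) 0 with h0 | h0
  · rw [h0]; exact mul_nonneg (opNorm_nonneg M) (euclNorm_nonneg' w)
  · have hpos : 0 < euclNorm (Mᵀ *ᵥ w) := lt_of_le_of_ne (euclNorm_nonneg' _) (Ne.symm h0)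
    have key : euclNorm (Mᵀ *ᵥ w) ^ 2 ≤ euclNorm w * (opNorm M * euclNorm (Mᵀ *ᵥ w)) := by
      rw [euclNorm_sq]
      have h1 : ∑ i, (Mᵀ *ᵥ w) i ^ 2 = (Mᵀ *ᵥ w) ⬝ᵥ (Mᵀ *ᵥ w) := by
        simp [dotProduct, sq]
      have h2 : (Mᵀ *ᵥ w) ⬝ᵥ (Mᵀ *ᵥ w) = w ⬝ᵥ (M *ᵥ (Mᵀ *ᵥ w)) := by
        rw [dotProduct_mulVec w, ← mulVec_transpose, dotProduct_comm]
      rw [h1, h2]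
      calc w ⬝ᵥ (M *ᵥ (Mᵀ *ᵥ w)) ≤ euclNorm w * euclNorm (M *ᵥ (Mᵀ *ᵥ w)) :=
            dotProduct_le_enorm _ _
      _ ≤ euclNorm w * (opNorm M * euclNorm (Mᵀ *ᵥ w)) :=
            mul_le_mul_of_nonneg_left (euclNorm_mulVec_le M _) (euclNorm_nonneg' w)
    nlinarith [euclNorm_nonneg' w, opNorm_nonneg M]

lemma dot_diag_sq {m n : ℕ} (A : Matrix (Fin m) (Fin n) ℝ) (d : Fin n → ℝ)
    (w : Fin m → ℝ) :
    w ⬝ᵥ ((A * Matrix.diagonal d ^ 2 * Aᵀ) *ᵥ w) = ∑ i, (d i * (Aᵀ *ᵥ w) i) ^ 2 := by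
  rw [← Matrix.mulVec_mulVec, ← Matrix.mulVec_mulVec]
  rw [Matrix.dotProduct_mulVec w A, ← Matrix.mulVec_transpose]
  rw [Matrix.diagonal_pow]
  simp only [Matrix.mulVec_diagonal, dotProduct]
  exact Finset.sum_congr rfl fun i _ => by simp [Pi.pow_apply]; ring

lemma dot_symm_conj {m : ℕ} (S N : Matrix (Fin m) (Fin m) ℝ) (hS : Sᵀ = S)
    (v : Fin m → ℝ) :
    v ⬝ᵥ ((S * N * S) *ᵥ v) = (S *ᵥ v) ⬝ᵥ (N *ᵥ (S *ᵥ v)) := by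
  rw [← Matrix.mulVec_mulVec, ← Matrix.mulVec_mulVec]
  rw [Matrix.dotProduct_mulVec v S, ← Matrix.mulVec_transpose, hS]

lemma lambdaMin_le_dot {ι : Type*} [Fintype ι] {M : Matrix ι ι ℝ} (hM : M.PosSemidef)
    {v : ι → ℝ} (hv : euclNorm v = 1) : lambdaMin M ≤ v ⬝ᵥ (M *ᵥ v) := by
  unfold lambdaMin
  apply csInf_le
  · refine ⟨0, ?_⟩
    rintro r ⟨w, hw, rfl⟩
    simpa using hM.dotProduct_mulVec_nonneg w
  · exact ⟨v, hv, rfl⟩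

lemma lambdaMin_mul_sq_le {ι : Type*} [Fintype ι] {M : Matrix ι ι ℝ} (hM : M.PosSemidef)
    (v : ι → ℝ) : lambdaMin M * euclNorm v ^ 2 ≤ v ⬝ᵥ (M *ᵥ v) := by
  rcases eq_or_ne v 0 with rfl | hv
  · simp [euclNorm_eq_zero.mpr rfl]
  · have hvn : 0 < euclNorm v := lt_of_le_of_ne (euclNorm_nonneg' v)
      (fun h => hv (euclNorm_eq_zero.mp h.symm))
    set u : ι → ℝ := (euclNorm v)⁻¹ • v with hu
    have hun : euclNorm u = 1 := by
      rw [hu, euclNorm_smul', abs_of_pos (inv_pos.mpr hvn), inv_mul_cancel₀ hvn.ne']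
    have h := lambdaMin_le_dot hM hun
    have hq : u ⬝ᵥ (M *ᵥ u) = (euclNorm v)⁻¹ ^ 2 * (v ⬝ᵥ (M *ᵥ v)) := by
      rw [hu, Matrix.mulVec_smul, dotProduct_smul, smul_dotProduct]
      simp only [smul_eq_mul]
      ring
    rw [hq] at h
    have h2 := mul_le_mul_of_nonneg_right h (sq_nonneg (euclNorm v))
    have h3 : (euclNorm v)⁻¹ ^ 2 * (v ⬝ᵥ (M *ᵥ v)) * euclNorm v ^ 2 = v ⬝ᵥ (M *ᵥ v) := by
      field_simp
    calc lambdaMin M * euclNorm v ^ 2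
        ≤ (euclNorm v)⁻¹ ^ 2 * (v ⬝ᵥ (M *ᵥ v)) * euclNorm v ^ 2 := h2
    _ = v ⬝ᵥ (M *ᵥ v) := h3

lemma psd_sqrt_mul_self {n : Type*} [Fintype n] [DecidableEq n]
    {A : Matrix n n ℝ} (hA : A.PosSemidef) : hA.sqrt * hA.sqrt = A := by
  have hU : (star hA.1.eigenvectorUnitary : Matrix n n ℝ) * hA.1.eigenvectorUnitary.1 = 1 :=
    Unitary.star_mul_self_of_mem hA.1.eigenvectorUnitary.2
  have hD : diagonal ((↑) ∘ (Real.sqrt ∘ hA.1.eigenvalues)) *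
      diagonal ((↑) ∘ (Real.sqrt ∘ hA.1.eigenvalues)) =
      diagonal (RCLike.ofReal ∘ hA.1.eigenvalues : n → ℝ) := by
    rw [diagonal_mul_diagonal]
    congr 1
    funext i
    simp [Real.mul_self_sqrt (hA.eigenvalues_nonneg i)]
  unfold Matrix.PosSemidef.sqrt
  conv_rhs => rw [hA.1.spectral_theorem, Unitary.conjStarAlgAut_apply]
  calc _ = hA.1.eigenvectorUnitary.1 * (diagonal ((↑) ∘ (Real.sqrt ∘ hA.1.eigenvalues)) *
        ((star hA.1.eigenvectorUnitary : Matrix n n ℝ) * hA.1.eigenvectorUnitary.1) *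
        diagonal ((↑) ∘ (Real.sqrt ∘ hA.1.eigenvalues))) *
        (star hA.1.eigenvectorUnitary : Matrix n n ℝ) := by simp only [Matrix.mul_assoc]
  _ = _ := by rw [hU, Matrix.mul_one, hD]

lemma psd_posSemidef_sqrt {n : Type*} [Fintype n] [DecidableEq n]
    {A : Matrix n n ℝ} (hA : A.PosSemidef) : hA.sqrt.PosSemidef := by
  have hD : (diagonal ((↑) ∘ (Real.sqrt ∘ hA.1.eigenvalues)) : Matrix n n ℝ).PosSemidef :=
    Matrix.posSemidef_diagonal_iff.mpr fun i => by simp [Real.sqrt_nonneg]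
  have h := hD.mul_mul_conjTranspose_same hA.1.eigenvectorUnitary.1
  unfold Matrix.PosSemidef.sqrt
  simpa [Matrix.star_eq_conjTranspose] using h

/-- conditioning within the Euclidean ball. -/
theorem stmt_2 {m n : ℕ} (A : Matrix (Fin m) (Fin n) ℝ)
    (hrank : A.rank = m)
    (x : Fin n → ℝ) (hx : ∀ i, 0 < x i)
    (hlam : 0 < lambdaMin (A * Matrix.diagonal x ^ 2 * Aᵀ))
    (β : ℝ) (hβ : β ≤ 1)
    (Δx : Fin n → ℝ)
    (hΔx : euclNorm Δx ≤ Real.sqrt (lambdaMin (A * Matrix.diagonal x ^ 2 * Aᵀ)) / opNorm A * β) :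
    (((((normalPSD A x).sqrt)⁻¹ * (A * Matrix.diagonal (x + Δx) ^ 2 * Aᵀ) *
          ((normalPSD A x).sqrt)⁻¹)
        - (1 - β) ^ 2 • (1 : Matrix (Fin m) (Fin m) ℝ)).PosSemidef
      ∧ ((1 + β) ^ 2 • (1 : Matrix (Fin m) (Fin m) ℝ)
        - (((normalPSD A x).sqrt)⁻¹ * (A * Matrix.diagonal (x + Δx) ^ 2 * Aᵀ) *
          ((normalPSD A x).sqrt)⁻¹)).PosSemidef)
    ∧ (β < 1 →
        (A * Matrix.diagonal (x + Δx) ^ 2 * Aᵀ).PosDef ∧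
        condNum (((normalPSD A x).sqrt)⁻¹ * (A * Matrix.diagonal (x + Δx) ^ 2 * Aᵀ) *
            ((normalPSD A x).sqrt)⁻¹)
          ≤ ((1 + β) / (1 - β)) ^ 2) := by
  classical
  set S : Matrix (Fin m) (Fin m) ℝ := (normalPSD A x).sqrt with hSdef
  set M' : Matrix (Fin m) (Fin m) ℝ := A * Matrix.diagonal (x + Δx) ^ 2 * Aᵀ with hM'def
  set N : Matrix (Fin m) (Fin m) ℝ := S⁻¹ * M' * S⁻¹ with hNdef
  set M : Matrix (Fin m) (Fin m) ℝ := A * Matrix.diagonal x ^ 2 * Aᵀ with hMdef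
  have hM : M.PosSemidef := normalPSD A x
  have hSS : S * S = M := psd_sqrt_mul_self (normalPSD A x)
  have hSpsd : S.PosSemidef := psd_posSemidef_sqrt (normalPSD A x)
  have hSt : Sᵀ = S := by
    have h := hSpsd.1
    rwa [Matrix.IsHermitian, Matrix.conjTranspose_eq_transpose_of_trivial] at h
  have hM'T : M'ᵀ = M' := by
    have h := (normalPSD A (x + Δx)).1
    rwa [Matrix.IsHermitian, Matrix.conjTranspose_eq_transpose_of_trivial, ← hM'def] at h
  have hex : ∃ v : Fin m → ℝ, euclNorm v = 1 := by
    by_contra h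
    push_neg at h
    have hset : {r : ℝ | ∃ v : Fin m → ℝ, euclNorm v = 1 ∧ r = v ⬝ᵥ (M *ᵥ v)} = ∅ := by
      ext r
      simp only [Set.mem_setOf_eq, Set.mem_empty_iff_false, iff_false, not_exists]
      rintro v ⟨hv, -⟩
      exact h v hv
    have h0 : lambdaMin M = 0 := by
      unfold lambdaMin
      rw [hset, Real.sInf_empty]
    rw [h0] at hlam
    exact lt_irrefl 0 hlam
  have hAop : 0 < opNorm A := by
    rcases lt_or_eq_of_le (opNorm_nonneg A) with h | h
    · exact h
    · exfalso
      have hA0 : ∀ v : Fin n → ℝ, A *ᵥ v = 0 := fun v => by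
        have h2 := euclNorm_mulVec_le A v
        rw [← h, zero_mul] at h2
        exact euclNorm_eq_zero.mp (le_antisymm h2 (euclNorm_nonneg' _))
      obtain ⟨v, hv⟩ := hex
      have hMv : M *ᵥ v = 0 := by
        have hMa : M = A * (Matrix.diagonal x ^ 2 * Aᵀ) := by
          rw [hMdef, Matrix.mul_assoc]
        rw [hMa, ← Matrix.mulVec_mulVec]
        exact hA0 _
      have h1 : lambdaMin M ≤ 0 := by
        have h2 := lambdaMin_le_dot hM hv
        rwa [hMv, dotProduct_zero] at h2
      exact absurd hlam (not_lt.mpr h1)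
  have hβ0 : 0 ≤ β := by
    have hc : 0 < Real.sqrt (lambdaMin M) / opNorm A :=
      div_pos (Real.sqrt_pos.mpr hlam) hAop
    by_contra hβ'
    push_neg at hβ'
    have hneg : Real.sqrt (lambdaMin M) / opNorm A * β < 0 :=
      mul_neg_of_pos_of_neg hc hβ'
    linarith [euclNorm_nonneg' Δx, hΔx]
  have hMpd : M.PosDef := by
    refine Matrix.PosDef.of_dotProduct_mulVec_pos hM.1 fun v hv => ?_
    have h1 := lambdaMin_mul_sq_le hM v
    have hvn : 0 < euclNorm v := lt_of_le_of_ne (euclNorm_nonneg' v)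
      (fun h => hv (euclNorm_eq_zero.mp h.symm))
    have h2 : 0 < lambdaMin M * euclNorm v ^ 2 := mul_pos hlam (by positivity)
    simpa using lt_of_lt_of_le h2 h1
  have hdetS : IsUnit S.det := by
    have h2 : S.det * S.det = M.det := by rw [← Matrix.det_mul, hSS]
    have h3 := hMpd.det_pos
    have hne : S.det ≠ 0 := by
      intro h
      rw [h, mul_zero] at h2
      exact h3.ne h2
    exact isUnit_iff_ne_zero.mpr hne
  have hS_inv : S * S⁻¹ = 1 := Matrix.mul_nonsing_inv S hdetS
  have hS_inv' : S⁻¹ * S = 1 := Matrix.nonsing_inv_mul S hdetS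
  have hSinvT : (S⁻¹)ᵀ = S⁻¹ := by rw [Matrix.transpose_nonsing_inv, hSt]
  have key : ∀ v : Fin m → ℝ,
      (1 - β) ^ 2 * euclNorm v ^ 2 ≤ v ⬝ᵥ (N *ᵥ v)
      ∧ v ⬝ᵥ (N *ᵥ v) ≤ (1 + β) ^ 2 * euclNorm v ^ 2 := by
    intro v
    set w : Fin m → ℝ := S⁻¹ *ᵥ v with hw
    set u : Fin n → ℝ := Aᵀ *ᵥ w with huu
    set a : Fin n → ℝ := fun i => x i * u i with hadef
    set b : Fin n → ℝ := fun i => Δx i * u i with hbdef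
    have hSw : S *ᵥ w = v := by
      rw [hw, Matrix.mulVec_mulVec, hS_inv, Matrix.one_mulVec]
    have hNv : v ⬝ᵥ (N *ᵥ v) = ∑ i, ((x + Δx) i * u i) ^ 2 := by
      rw [hNdef, dot_symm_conj _ _ hSinvT, hM'def, dot_diag_sq, ← hw, ← huu]
    have hq : w ⬝ᵥ (M *ᵥ w) = euclNorm v ^ 2 := by
      rw [← hSS, ← Matrix.mulVec_mulVec, dotProduct_mulVec w S,
        ← Matrix.mulVec_transpose, hSt, hSw, euclNorm_sq]
      simp [dotProduct, sq]
    have hsumma : ∑ i, a i ^ 2 = euclNorm v ^ 2 := by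
      rw [← hq, hMdef, dot_diag_sq, ← huu]
    have ha : euclNorm a = euclNorm v := by
      have h3 : euclNorm a ^ 2 = euclNorm v ^ 2 := by rw [euclNorm_sq]; exact hsumma
      have h4 := congrArg Real.sqrt h3
      rwa [Real.sqrt_sq (euclNorm_nonneg' _), Real.sqrt_sq (euclNorm_nonneg' _)] at h4
    have hwle : Real.sqrt (lambdaMin M) * euclNorm w ≤ euclNorm v := by
      have h5 := (lambdaMin_mul_sq_le hM w).trans_eq hq
      nlinarith [Real.sq_sqrt hlam.le, Real.sqrt_nonneg (lambdaMin M),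
        euclNorm_nonneg' w, euclNorm_nonneg' v,
        sq_nonneg (Real.sqrt (lambdaMin M) * euclNorm w - euclNorm v),
        sq_nonneg (Real.sqrt (lambdaMin M) * euclNorm w + euclNorm v)]
    have hu_le : euclNorm u ≤ opNorm A * euclNorm w := by
      rw [huu]
      exact euclNorm_transpose_mulVec_le A w
    have hb : euclNorm b ≤ β * euclNorm v := by
      have h6 : euclNorm b ≤ euclNorm Δx * euclNorm u := by
        rw [hbdef]
        exact euclNorm_mul_le Δx u
      have h7 : euclNorm Δx * euclNorm u
          ≤ (Real.sqrt (lambdaMin M) / opNorm A * β) * (opNorm A * euclNorm w) :=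
        mul_le_mul hΔx hu_le (euclNorm_nonneg' u)
          (mul_nonneg (div_nonneg (Real.sqrt_nonneg _) hAop.le) hβ0)
      have h8 : (Real.sqrt (lambdaMin M) / opNorm A * β) * (opNorm A * euclNorm w)
          = β * (Real.sqrt (lambdaMin M) * euclNorm w) := by
        field_simp
      have h9 : β * (Real.sqrt (lambdaMin M) * euclNorm w) ≤ β * euclNorm v :=
        mul_le_mul_of_nonneg_left hwle hβ0
      linarith
    have habu : (fun i => (x + Δx) i * u i) = a + b := by
      funext i
      simp only [hadef, hbdef, Pi.add_apply]
      ring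
    have hNv2 : v ⬝ᵥ (N *ᵥ v) = euclNorm (a + b) ^ 2 := by
      rw [hNv, euclNorm_sq, ← habu]
    have htri1 : euclNorm (a + b) ≤ (1 + β) * euclNorm v := by
      have h10 := euclNorm_triangle a b
      rw [ha] at h10
      linarith
    have htri2 : (1 - β) * euclNorm v ≤ euclNorm (a + b) := by
      have h11 := euclNorm_sub_le_add a b
      rw [ha] at h11
      linarith
    constructor
    · have h0 : 0 ≤ (1 - β) * euclNorm v := mul_nonneg (by linarith) (euclNorm_nonneg' v)
      have h1 := pow_le_pow_left₀ h0 htri2 2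
      rw [hNv2]
      calc (1 - β) ^ 2 * euclNorm v ^ 2 = ((1 - β) * euclNorm v) ^ 2 := by ring
      _ ≤ euclNorm (a + b) ^ 2 := h1
    · have h1 := pow_le_pow_left₀ (euclNorm_nonneg' (a + b)) htri1 2
      rw [hNv2]
      calc euclNorm (a + b) ^ 2 ≤ ((1 + β) * euclNorm v) ^ 2 := h1
      _ = (1 + β) ^ 2 * euclNorm v ^ 2 := by ring
  have hNpsd : N.PosSemidef := by
    have h := (normalPSD A (x + Δx)).mul_mul_conjTranspose_same (S⁻¹)
    rwa [Matrix.conjTranspose_eq_transpose_of_trivial, hSinvT, ← hM'def, ← hNdef] at h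
  have hNt : Nᵀ = N := by
    have h := hNpsd.1
    rwa [Matrix.IsHermitian, Matrix.conjTranspose_eq_transpose_of_trivial] at h
  have hvv : ∀ v : Fin m → ℝ, v ⬝ᵥ v = euclNorm v ^ 2 := by
    intro v
    rw [euclNorm_sq]
    simp [dotProduct, sq]
  have quadform : ∀ (c : ℝ) (v : Fin m → ℝ),
      v ⬝ᵥ ((N - c • (1 : Matrix (Fin m) (Fin m) ℝ)) *ᵥ v)
        = v ⬝ᵥ (N *ᵥ v) - c * euclNorm v ^ 2 := by
    intro c v
    rw [Matrix.sub_mulVec, dotProduct_sub, Matrix.smul_mulVec, Matrix.one_mulVec,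
      dotProduct_smul, smul_eq_mul, hvv]
  have quadform2 : ∀ (c : ℝ) (v : Fin m → ℝ),
      v ⬝ᵥ ((c • (1 : Matrix (Fin m) (Fin m) ℝ) - N) *ᵥ v)
        = c * euclNorm v ^ 2 - v ⬝ᵥ (N *ᵥ v) := by
    intro c v
    rw [Matrix.sub_mulVec, dotProduct_sub, Matrix.smul_mulVec, Matrix.one_mulVec,
      dotProduct_smul, smul_eq_mul, hvv]
  refine ⟨⟨Matrix.PosSemidef.of_dotProduct_mulVec_nonneg ?_ ?_,
    Matrix.PosSemidef.of_dotProduct_mulVec_nonneg ?_ ?_⟩, ?_⟩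
  · rw [Matrix.IsHermitian, Matrix.conjTranspose_eq_transpose_of_trivial,
      Matrix.transpose_sub, Matrix.transpose_smul, Matrix.transpose_one, hNt]
  · intro v
    rw [star_trivial, quadform]
    linarith [(key v).1]
  · rw [Matrix.IsHermitian, Matrix.conjTranspose_eq_transpose_of_trivial,
      Matrix.transpose_sub, Matrix.transpose_smul, Matrix.transpose_one, hNt]
  · intro v
    rw [star_trivial, quadform2]
    linarith [(key v).2]
  · intro hβ1
    have hM'eq : S * N * S = M' := by
      rw [hNdef]
      rw [show S * (S⁻¹ * M' * S⁻¹) * S = S * S⁻¹ * M' * (S⁻¹ * S) by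
        simp only [Matrix.mul_assoc]]
      rw [hS_inv, hS_inv', Matrix.one_mul, Matrix.mul_one]
    constructor
    · refine Matrix.PosDef.of_dotProduct_mulVec_pos ?_ fun v hv => ?_
      · have h := (normalPSD A (x + Δx)).1
        rwa [← hM'def] at h
      · rw [star_trivial, ← hM'eq, dot_symm_conj _ _ hSt]
        have hSv0 : S *ᵥ v ≠ 0 := by
          intro h
          apply hv
          have h2 : S⁻¹ *ᵥ (S *ᵥ v) = v := by
            rw [Matrix.mulVec_mulVec, hS_inv', Matrix.one_mulVec]
          rw [h, Matrix.mulVec_zero] at h2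
          exact h2.symm
        have h1 := (key (S *ᵥ v)).1
        have h2 : 0 < euclNorm (S *ᵥ v) := lt_of_le_of_ne (euclNorm_nonneg' _)
          (fun h => hSv0 (euclNorm_eq_zero.mp h.symm))
        have h3 : 0 < (1 - β) ^ 2 * euclNorm (S *ᵥ v) ^ 2 :=
          mul_pos (pow_pos (by linarith) 2) (pow_pos h2 2)
        linarith
    · have hne : {r : ℝ | ∃ v : Fin m → ℝ, euclNorm v = 1 ∧ r = v ⬝ᵥ (N *ᵥ v)}.Nonempty := by
        obtain ⟨v, hv⟩ := hex
        exact ⟨v ⬝ᵥ (N *ᵥ v), v, hv, rfl⟩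
      have hmax : lambdaMax N ≤ (1 + β) ^ 2 := by
        unfold lambdaMax
        apply csSup_le hne
        rintro r ⟨v, hv, rfl⟩
        have h1 := (key v).2
        rw [hv] at h1
        simpa using h1
      have hmin : (1 - β) ^ 2 ≤ lambdaMin N := by
        unfold lambdaMin
        apply le_csInf hne
        rintro r ⟨v, hv, rfl⟩
        have h1 := (key v).1
        rw [hv] at h1
        simpa using h1
      have hminpos : (0:ℝ) < (1 - β) ^ 2 := pow_pos (by linarith) 2
      unfold condNum
      rw [div_pow]
      exact div_le_div₀ (sq_nonneg _) hmax hminpos hmin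
end

section
/- Under assumption A1, let μ > 0, let x ∈ F_p together with (y, s) ∈ F_d satisfy the centering condition Xs = μe (componentwise x_j s_j = μ), and let (x*, y*, s*) be a strictly complementary optimal primal-dual pair. Then for every index j ∈ N one has x_j ≤ μ n / s*_j ≤ γμ, where γ = n / min_{j'∈N} s*_{j'}. -/
open Matrix

/-- bound on centered primal coordinates over the
non-basic index set `N`. -/
theorem stmt_4 {m n : ℕ} (A : Matrix (Fin m) (Fin n) ℝ) (b : Fin m → ℝ) (c : Fin n → ℝ)
    -- Assumption A1: nonempty primal and dual interiors, full row rank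
    (hrank : A.rank = m)
    (hFp0 : ∃ x0 : Fin n → ℝ, A *ᵥ x0 = b ∧ ∀ i, 0 < x0 i)
    (hFd0 : ∃ (y0 : Fin m → ℝ) (s0 : Fin n → ℝ), Aᵀ *ᵥ y0 + s0 = c ∧ ∀ i, 0 < s0 i)
    (μ : ℝ) (hμ : 0 < μ)
    (x : Fin n → ℝ) (y : Fin m → ℝ) (s : Fin n → ℝ)
    (hxfeas : A *ᵥ x = b) (hxnn : ∀ i, 0 ≤ x i)
    (hdfeas : Aᵀ *ᵥ y + s = c) (hsnn : ∀ i, 0 ≤ s i)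
    (hcenter : ∀ j, x j * s j = μ)
    -- a strictly complementary optimal primal-dual pair (x*, y*, s*)
    (xstar : Fin n → ℝ) (ystar : Fin m → ℝ) (sstar : Fin n → ℝ)
    (hxsfeas : A *ᵥ xstar = b) (hxsnn : ∀ i, 0 ≤ xstar i)
    (hdsfeas : Aᵀ *ᵥ ystar + sstar = c) (hssnn : ∀ i, 0 ≤ sstar i)
    (hcomp : xstar ⬝ᵥ sstar = 0)
    (hstrict : ∀ j, 0 < xstar j + sstar j)
    :
    ∀ j, 0 < sstar j →
      x j ≤ μ * n / sstar j ∧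
      μ * n / sstar j ≤ (n / sInf (sstar '' {j | 0 < sstar j})) * μ := by

  intro j hj
  -- orthogonality: (x - xstar) ⬝ (s - sstar) = 0
  have hdiff : s - sstar = Aᵀ *ᵥ (ystar - y) := by
    have := hdfeas
    have := hdsfeas
    have h : Aᵀ *ᵥ (ystar - y) = (Aᵀ *ᵥ ystar + sstar) - (Aᵀ *ᵥ y + s) + (s - sstar) := by
      rw [Matrix.mulVec_sub]; abel
    rw [h, hdfeas, hdsfeas]; abel
  have horth : (x - xstar) ⬝ᵥ (s - sstar) = 0 := by
    rw [hdiff, Matrix.dotProduct_mulVec, Matrix.vecMul_transpose, Matrix.mulVec_sub,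
      hxfeas, hxsfeas, sub_self]
    simp [dotProduct]
  have hxs : x ⬝ᵥ s = (n : ℝ) * μ := by
    simp only [dotProduct]
    rw [Finset.sum_congr rfl (fun j _ => hcenter j)]
    simp [mul_comm]
  have hkey : x ⬝ᵥ sstar + xstar ⬝ᵥ s = (n : ℝ) * μ := by
    have hexp : (x - xstar) ⬝ᵥ (s - sstar)
        = x ⬝ᵥ s - x ⬝ᵥ sstar - xstar ⬝ᵥ s + xstar ⬝ᵥ sstar := by
      simp [sub_dotProduct, dotProduct_sub]; ring
    rw [hexp, hxs, hcomp] at horth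
    linarith
  have hnn1 : 0 ≤ xstar ⬝ᵥ s := Finset.sum_nonneg fun i _ => mul_nonneg (hxsnn i) (hsnn i)
  have hxsstar : x ⬝ᵥ sstar ≤ (n : ℝ) * μ := by linarith
  have hterm : x j * sstar j ≤ x ⬝ᵥ sstar := by
    apply Finset.single_le_sum (f := fun i => x i * sstar i)
      (fun i _ => mul_nonneg (hxnn i) (hssnn i)) (Finset.mem_univ j)
  have h1 : x j ≤ μ * n / sstar j := by
    rw [le_div_iff₀ hj]
    calc x j * sstar j ≤ (n : ℝ) * μ := le_trans hterm hxsstar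
    _ = μ * n := by ring
  refine ⟨h1, ?_⟩
  -- second inequality
  set S := sstar '' {i | 0 < sstar i} with hS
  have hfin : S.Finite := (Set.finite_univ.subset (Set.subset_univ _)).image _
  have hmem : sstar j ∈ S := ⟨j, hj, rfl⟩
  have hne : S.Nonempty := ⟨_, hmem⟩
  have hinf_mem : sInf S ∈ S := hne.csInf_mem hfin
  have hinf_pos : 0 < sInf S := by
    obtain ⟨i, hi, hie⟩ := hinf_mem
    rw [← hie]; exact hi
  have hinf_le : sInf S ≤ sstar j := csInf_le hfin.bddBelow hmem
  have : μ * n / sstar j ≤ μ * n / sInf S :=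
    div_le_div_of_nonneg_left (by positivity) hinf_pos hinf_le
  calc μ * n / sstar j ≤ μ * n / sInf S := this
  _ = (n / sInf S) * μ := by ring
end

section
/- (Shifted scaling) Let A ∈ ℝ^{m×n} have full row rank, let x ∈ ℝⁿ with x > 0, let β ≤ 1/4, and let Δx ∈ ℝⁿ satisfy ‖X⁻¹Δx‖ ≤ β. Write W = diag(x + Δx) (so x + Δx > 0). Then for all v ∈ ℝⁿ, ‖[ X⁻¹W · P_{AW} · X⁻¹W − P_{AX} ] v‖ ≤ 3β ‖P_{AX} v‖. -/
open Matrix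

section helpers

variable {m n : ℕ}

lemma enorm_eq_sqrt_dot (v : Fin n → ℝ) : euclNorm v = Real.sqrt (v ⬝ᵥ v) := by
  simp [euclNorm, dotProduct, sq]

lemma enorm_nonneg' (v : Fin n → ℝ) : 0 ≤ euclNorm v := Real.sqrt_nonneg _

lemma dot_self_nonneg (v : Fin n → ℝ) : 0 ≤ v ⬝ᵥ v :=
  Finset.sum_nonneg fun i _ => mul_self_nonneg _

lemma enorm_le_enorm (u w : Fin n → ℝ) (h : u ⬝ᵥ u ≤ w ⬝ᵥ w) : euclNorm u ≤ euclNorm w := by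
  rw [enorm_eq_sqrt_dot, enorm_eq_sqrt_dot]
  exact Real.sqrt_le_sqrt h

lemma abs_le_enorm (v : Fin n → ℝ) (i : Fin n) : |v i| ≤ euclNorm v := by
  have h1 : (v i) ^ 2 ≤ ∑ j, (v j) ^ 2 :=
    Finset.single_le_sum (fun j _ => sq_nonneg (v j)) (Finset.mem_univ i)
  have := Real.sqrt_le_sqrt h1
  rwa [Real.sqrt_sq_eq_abs] at this

lemma enorm_proj (Q : Matrix (Fin n) (Fin n) ℝ) (hs : Qᵀ = Q) (hi : Q * Q = Q)
    (z : Fin n → ℝ) : euclNorm (Q *ᵥ z) ≤ euclNorm z := by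
  apply enorm_le_enorm
  have key : (Q *ᵥ z) ⬝ᵥ (Q *ᵥ z) = z ⬝ᵥ (Q *ᵥ z) := by
    have h1 : Q *ᵥ z = z ᵥ* Q := by
      rw [← hs, mulVec_transpose, hs]
    calc (Q *ᵥ z) ⬝ᵥ (Q *ᵥ z) = (z ᵥ* Q) ⬝ᵥ (Q *ᵥ z) := by rw [← h1]
    _ = z ⬝ᵥ (Q *ᵥ (Q *ᵥ z)) := (dotProduct_mulVec z Q (Q *ᵥ z)).symm
    _ = z ⬝ᵥ ((Q * Q) *ᵥ z) := by rw [mulVec_mulVec]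
    _ = z ⬝ᵥ (Q *ᵥ z) := by rw [hi]
  have hr : 0 ≤ (z - Q *ᵥ z) ⬝ᵥ (z - Q *ᵥ z) := dot_self_nonneg _
  have hexp : (z - Q *ᵥ z) ⬝ᵥ (z - Q *ᵥ z)
      = z ⬝ᵥ z - z ⬝ᵥ (Q *ᵥ z) - ((Q *ᵥ z) ⬝ᵥ z - (Q *ᵥ z) ⬝ᵥ (Q *ᵥ z)) := by
    simp only [sub_dotProduct, dotProduct_sub]
    ring
  have hc : (Q *ᵥ z) ⬝ᵥ z = z ⬝ᵥ (Q *ᵥ z) := dotProduct_comm _ _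
  linarith

lemma enorm_diag_le (c v : Fin n → ℝ) (M : ℝ) (hM : 0 ≤ M) (hc : ∀ i, |c i| ≤ M) :
    euclNorm (diagonal c *ᵥ v) ≤ M * euclNorm v := by
  unfold euclNorm
  have h1 : ∑ i, ((diagonal c *ᵥ v) i) ^ 2 ≤ M ^ 2 * ∑ i, (v i) ^ 2 := by
    rw [Finset.mul_sum]
    apply Finset.sum_le_sum
    intro i _
    rw [mulVec_diagonal]
    have := hc i
    nlinarith [mul_le_mul (hc i) (hc i) (abs_nonneg (c i)) hM, sq_abs (c i), sq_nonneg (v i)]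
  calc Real.sqrt (∑ i, ((diagonal c *ᵥ v) i) ^ 2)
      ≤ Real.sqrt (M ^ 2 * ∑ i, (v i) ^ 2) := Real.sqrt_le_sqrt h1
    _ = M * Real.sqrt (∑ i, (v i) ^ 2) := by
        rw [Real.sqrt_mul (sq_nonneg M), Real.sqrt_sq hM]

variable (B : Matrix (Fin m) (Fin n) ℝ)

lemma gp_mul_left (hd : IsUnit (B * Bᵀ).det) : B * gradProj B = 0 := by
  unfold gradProj
  rw [Matrix.mul_sub, Matrix.mul_one, ← Matrix.mul_assoc, ← Matrix.mul_assoc,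
    Matrix.mul_nonsing_inv _ hd, Matrix.one_mul, sub_self]

lemma gp_mul_Bt (hd : IsUnit (B * Bᵀ).det) : gradProj B * Bᵀ = 0 := by
  unfold gradProj
  rw [Matrix.sub_mul, Matrix.one_mul, Matrix.mul_assoc, Matrix.mul_assoc,
    Matrix.nonsing_inv_mul _ hd, Matrix.mul_one, sub_self]

lemma gp_idem (hd : IsUnit (B * Bᵀ).det) : gradProj B * gradProj B = gradProj B := by
  nth_rewrite 2 [gradProj]
  rw [Matrix.mul_sub, Matrix.mul_one, ← Matrix.mul_assoc, ← Matrix.mul_assoc, gp_mul_Bt B hd,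
    Matrix.zero_mul, Matrix.zero_mul, sub_zero]

lemma gp_symm : (gradProj B)ᵀ = gradProj B := by
  unfold gradProj
  rw [transpose_sub, transpose_one, transpose_mul, transpose_mul, transpose_transpose,
    Matrix.transpose_nonsing_inv, transpose_mul, transpose_transpose, Matrix.mul_assoc]

lemma gp_fix (y : Fin n → ℝ) (h : B *ᵥ y = 0) : gradProj B *ᵥ y = y := by
  unfold gradProj
  rw [sub_mulVec, one_mulVec, Matrix.mul_assoc, ← mulVec_mulVec, ← mulVec_mulVec, h,
    mulVec_zero, mulVec_zero, sub_zero]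

lemma normal_isUnit (A : Matrix (Fin m) (Fin n) ℝ) (hrank : A.rank = m)
    (w : Fin n → ℝ) (hw : ∀ i, w i ≠ 0) :
    IsUnit ((A * diagonal w) * (A * diagonal w)ᵀ).det := by
  set C := A * diagonal w with hC
  have hAt : Function.Injective (Aᵀ.mulVecLin) := by
    rw [← LinearMap.ker_eq_bot, ← Submodule.finrank_eq_zero]
    have h2 := LinearMap.finrank_range_add_finrank_ker (Aᵀ.mulVecLin)
    have h3 : Module.finrank ℝ (LinearMap.range Aᵀ.mulVecLin) = m := by
      have h4 : Aᵀ.rank = m := by rw [Matrix.rank_transpose, hrank]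
      simpa [Matrix.rank] using h4
    rw [h3, Module.finrank_fin_fun] at h2
    omega
  rw [← Matrix.isUnit_iff_isUnit_det]
  rw [← Matrix.mulVec_injective_iff_isUnit]
  intro y1 y2 h
  have h0 : (C * Cᵀ) *ᵥ (y1 - y2) = 0 := by
    rw [mulVec_sub, h, sub_self]
  set y := y1 - y2 with hy
  have hs : (Cᵀ *ᵥ y) ⬝ᵥ (Cᵀ *ᵥ y) = 0 := by
    calc (Cᵀ *ᵥ y) ⬝ᵥ (Cᵀ *ᵥ y) = (y ᵥ* C) ⬝ᵥ (Cᵀ *ᵥ y) := by rw [mulVec_transpose]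
      _ = y ⬝ᵥ (C *ᵥ (Cᵀ *ᵥ y)) := (dotProduct_mulVec y C (Cᵀ *ᵥ y)).symm
      _ = y ⬝ᵥ ((C * Cᵀ) *ᵥ y) := by rw [mulVec_mulVec]
      _ = 0 := by rw [h0, dotProduct_zero]
  have hs0 : Cᵀ *ᵥ y = 0 := dotProduct_self_eq_zero.mp hs
  have hAy : Aᵀ *ᵥ y = 0 := by
    have hCt : Cᵀ = diagonal w * Aᵀ := by
      rw [hC, transpose_mul, diagonal_transpose]
    rw [hCt, ← mulVec_mulVec] at hs0
    funext i
    have := congr_fun hs0 i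
    rw [mulVec_diagonal] at this
    have := mul_eq_zero.mp this
    rcases this with h' | h'
    · exact absurd h' (hw i)
    · exact h'
  have : Aᵀ.mulVecLin y = 0 := by rwa [mulVecLin_apply]
  have hy0 : y = 0 := by
    have := hAt (by rw [this, map_zero] : Aᵀ.mulVecLin y = Aᵀ.mulVecLin 0)
    exact this
  rw [hy] at hy0
  exact sub_eq_zero.mp hy0

lemma scalar_bound (β t : ℝ) (h0 : 0 ≤ β) (h4 : β ≤ 1/4)
    (h1 : 1 - β ≤ t) (h2 : t ≤ 1 + β) : |t - t⁻¹| ≤ β * (2 - β) / (1 - β) := by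
  have hβ1 : (0:ℝ) < 1 - β := by linarith
  have ht0 : 0 < t := by linarith
  have hpos : 0 < t * (1 - β) := mul_pos ht0 hβ1
  set K := β * (2 - β) / (1 - β) with hK
  rw [abs_le]
  constructor
  · have key : (t⁻¹ - t) * (t * (1 - β)) ≤ K * (t * (1 - β)) := by
      have e1 : (t⁻¹ - t) * (t * (1-β)) = (1 - t^2) * (1-β) := by
        field_simp
      have e2 : K * (t * (1-β)) = β * (2-β) * t := by
        rw [hK]
        field_simp
      rw [e1, e2]
      nlinarith [mul_nonneg (mul_nonneg hβ1.le (by linarith : (0:ℝ) ≤ 1 + t))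
        (by linarith : (0:ℝ) ≤ t - (1-β)), mul_nonneg h0 (by linarith : (0:ℝ) ≤ t - (1-β))]
    have := le_of_mul_le_mul_right key hpos
    linarith
  · have key : (t - t⁻¹) * (t * (1 - β)) ≤ K * (t * (1 - β)) := by
      have e1 : (t - t⁻¹) * (t * (1-β)) = (t^2 - 1) * (1-β) := by
        field_simp
      have e2 : K * (t * (1-β)) = β * (2-β) * t := by
        rw [hK]
        field_simp
      rw [e1, e2]
      nlinarith [mul_nonneg (mul_nonneg hβ1.le (by linarith : (0:ℝ) ≤ 1 + t))
        (by linarith : (0:ℝ) ≤ β - (t - 1)), mul_nonneg h0 (by linarith : (0:ℝ) ≤ t - (1-β))]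
    exact le_of_mul_le_mul_right key hpos


lemma diag_eq {n : ℕ} (f g : Fin n → ℝ) (h : ∀ i, f i = g i) :
    Matrix.diagonal f = Matrix.diagonal g := congrArg _ (funext h)

end helpers

/-- the shifted scaling theorem. -/
theorem stmt_7 {m n : ℕ} (A : Matrix (Fin m) (Fin n) ℝ)
    (hrank : A.rank = m)
    (x : Fin n → ℝ) (hx : ∀ i, 0 < x i)
    (β : ℝ) (hβ : β ≤ 1 / 4)
    (Δx : Fin n → ℝ)
    (hΔx : euclNorm ((Matrix.diagonal x)⁻¹ *ᵥ Δx) ≤ β) :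
    ∀ v : Fin n → ℝ,
      euclNorm (((Matrix.diagonal x)⁻¹ * Matrix.diagonal (x + Δx) *
            gradProj (A * Matrix.diagonal (x + Δx)) *
            ((Matrix.diagonal x)⁻¹ * Matrix.diagonal (x + Δx))
          - gradProj (A * Matrix.diagonal x)) *ᵥ v)
        ≤ 3 * β * euclNorm (gradProj (A * Matrix.diagonal x) *ᵥ v) := by
  intro v
  have hβ0 : 0 ≤ β := le_trans (enorm_nonneg' _) hΔx
  have hβ1 : (0:ℝ) < 1 - β := by linarith
  have hxne : ∀ i, x i ≠ 0 := fun i => (hx i).ne'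
  have hXinv : (Matrix.diagonal x)⁻¹ = Matrix.diagonal (fun i => (x i)⁻¹) := by
    apply Matrix.inv_eq_right_inv
    rw [diagonal_mul_diagonal, ← diagonal_one]
    apply diag_eq
    intro i
    simp [mul_inv_cancel₀ (hxne i)]
  set d : Fin n → ℝ := fun i => (x i)⁻¹ * (x i + Δx i) with hdd
  have hδ : ∀ i, |(x i)⁻¹ * Δx i| ≤ β := by
    intro i
    have h1 : ((Matrix.diagonal x)⁻¹ *ᵥ Δx) i = (x i)⁻¹ * Δx i := by
      rw [hXinv, mulVec_diagonal]
    calc |(x i)⁻¹ * Δx i| = |((Matrix.diagonal x)⁻¹ *ᵥ Δx) i| := by rw [h1]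
      _ ≤ euclNorm ((Matrix.diagonal x)⁻¹ *ᵥ Δx) := abs_le_enorm _ i
      _ ≤ β := hΔx
  have hdi : ∀ i, d i = 1 + (x i)⁻¹ * Δx i := by
    intro i
    simp only [hdd]
    rw [mul_add, inv_mul_cancel₀ (hxne i)]
  have hdlo : ∀ i, 1 - β ≤ d i := by
    intro i
    have := (abs_le.mp (hδ i)).1
    rw [hdi i]; linarith
  have hdhi : ∀ i, d i ≤ 1 + β := by
    intro i
    have := (abs_le.mp (hδ i)).2
    rw [hdi i]; linarith
  have hd0 : ∀ i, 0 < d i := fun i => lt_of_lt_of_le hβ1 (hdlo i)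
  have hdne : ∀ i, d i ≠ 0 := fun i => (hd0 i).ne'
  have hxd : ∀ i, x i * d i = x i + Δx i := by
    intro i
    simp only [hdd]
    rw [← mul_assoc, mul_inv_cancel₀ (hxne i), one_mul]
  set B := A * Matrix.diagonal x with hB
  set C := A * Matrix.diagonal (x + Δx) with hC
  set P := gradProj B with hP
  set Q := gradProj C with hQ
  set D := Matrix.diagonal d with hD
  have hdetB : IsUnit (B * Bᵀ).det := normal_isUnit A hrank x hxne
  have hw0 : ∀ i, (x + Δx) i ≠ 0 := by
    intro i
    have : x i + Δx i = x i * d i := (hxd i).symm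
    simp only [Pi.add_apply, this]
    exact mul_ne_zero (hxne i) (hdne i)
  have hdetC : IsUnit (C * Cᵀ).det := normal_isUnit A hrank (x + Δx) hw0
  have hBD : B * D = C := by
    rw [hB, hD, hC, Matrix.mul_assoc, diagonal_mul_diagonal]
    apply congrArg (fun M => A * M)
    apply diag_eq
    intro i
    simp [hxd i]
  have hXW : (Matrix.diagonal x)⁻¹ * Matrix.diagonal (x + Δx) = D := by
    rw [hXinv, hD, diagonal_mul_diagonal]
    apply diag_eq
    intro i
    simp [hdd]
  have hDt : Dᵀ = D := by rw [hD, diagonal_transpose]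
  have hDBt : D * Bᵀ = Cᵀ := by
    rw [← hBD]
    conv_rhs => rw [transpose_mul]
    rw [hDt]
  have hPP : P * P = P := gp_idem B hdetB
  have h2 : D * Q * D * (Bᵀ * (B * Bᵀ)⁻¹ * B) = 0 := by
    have e : D * Q * D * (Bᵀ * (B * Bᵀ)⁻¹ * B)
        = D * (Q * (D * Bᵀ)) * ((B * Bᵀ)⁻¹ * B) := by
      simp only [Matrix.mul_assoc]
    rw [e, hDBt, hQ, gp_mul_Bt C hdetC, Matrix.mul_zero, Matrix.zero_mul]
  have h3 : D * Q * D * P = D * Q * D := by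
    rw [hP]
    unfold gradProj
    rw [Matrix.mul_sub, Matrix.mul_one, h2, sub_zero]
  have hMP : (D * Q * D - P) * P = D * Q * D - P := by
    rw [Matrix.sub_mul, h3, hPP]
  set u := P *ᵥ v with hu
  have hvec : (D * Q * D - P) *ᵥ v = (D * Q * D - P) *ᵥ u := by
    rw [hu]
    conv_lhs => rw [← hMP, ← Matrix.mulVec_mulVec]
  have hBu : B *ᵥ u = 0 := by
    rw [hu, mulVec_mulVec, hP, gp_mul_left B hdetB, zero_mulVec]
  have hPu : P *ᵥ u = u := by
    rw [hu, mulVec_mulVec, hPP]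
  clear_value u
  set d' : Fin n → ℝ := fun i => (d i)⁻¹ with hd'
  set D' := Matrix.diagonal d' with hD'
  have hDD' : D * D' = 1 := by
    rw [hD, hD', diagonal_mul_diagonal, ← diagonal_one]
    apply diag_eq
    intro i
    exact mul_inv_cancel₀ (hdne i)
  have hCD' : C * D' = B := by
    rw [← hBD, Matrix.mul_assoc, hDD', Matrix.mul_one]
  have hQD'u : Q *ᵥ (D' *ᵥ u) = D' *ᵥ u := by
    rw [hQ]
    apply gp_fix
    rw [mulVec_mulVec, hCD', hBu]
  set z := D *ᵥ u - D' *ᵥ u with hz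
  have hzd : z = Matrix.diagonal (fun i => d i - d' i) *ᵥ u := by
    funext i
    simp only [hz, Pi.sub_apply, hD, hD', mulVec_diagonal, sub_mul]
  clear_value z
  have hkey : (D * Q * D - P) *ᵥ u = D *ᵥ (Q *ᵥ z) := by
    have e3 : D *ᵥ u = z + D' *ᵥ u := by rw [hz, sub_add_cancel]
    calc (D * Q * D - P) *ᵥ u
        = (D * Q * D) *ᵥ u - P *ᵥ u := sub_mulVec _ _ _
      _ = D *ᵥ (Q *ᵥ (D *ᵥ u)) - u := by
          rw [hPu, Matrix.mulVec_mulVec, Matrix.mulVec_mulVec]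
      _ = D *ᵥ (Q *ᵥ z + D' *ᵥ u) - u := by rw [e3, mulVec_add, hQD'u]
      _ = D *ᵥ (Q *ᵥ z) + D *ᵥ (D' *ᵥ u) - u := by rw [mulVec_add]
      _ = D *ᵥ (Q *ᵥ z) + u - u := by rw [Matrix.mulVec_mulVec u D D', hDD', one_mulVec]
      _ = D *ᵥ (Q *ᵥ z) := by rw [add_sub_cancel_right]
  set K := β * (2 - β) / (1 - β) with hK
  have hK0 : 0 ≤ K := div_nonneg (mul_nonneg hβ0 (by linarith)) (le_of_lt hβ1)
  have hzb : euclNorm z ≤ K * euclNorm u := by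
    rw [hzd]
    apply enorm_diag_le _ _ _ hK0
    intro i
    exact scalar_bound β (d i) hβ0 hβ (hdlo i) (hdhi i)
  have hQz : euclNorm (Q *ᵥ z) ≤ euclNorm z := by
    rw [hQ]
    exact enorm_proj _ (gp_symm C) (gp_idem C hdetC) z
  have hDz : euclNorm (D *ᵥ (Q *ᵥ z)) ≤ (1 + β) * euclNorm (Q *ᵥ z) := by
    rw [hD]
    apply enorm_diag_le _ _ _ (by linarith)
    intro i
    rw [abs_le]
    constructor
    · have := hdlo i; linarith
    · exact hdhi i
  have hfin : (1 + β) * K ≤ 3 * β := by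
    have hnum : (1 + β) * (β * (2 - β)) ≤ 3 * β * (1 - β) := by
      nlinarith [mul_nonneg hβ0 (by linarith : (0:ℝ) ≤ 1 - 4 * β),
        mul_nonneg hβ0 (sq_nonneg β)]
    rw [hK]
    calc (1 + β) * (β * (2 - β) / (1 - β)) = (1 + β) * (β * (2 - β)) / (1 - β) := by ring
      _ ≤ 3 * β := by rw [div_le_iff₀ hβ1]; linarith
  rw [hXW]
  calc euclNorm ((D * Q * D - P) *ᵥ v) = euclNorm (D *ᵥ (Q *ᵥ z)) := by rw [hvec, hkey]
    _ ≤ (1 + β) * euclNorm (Q *ᵥ z) := hDz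
    _ ≤ (1 + β) * euclNorm z := by
        have := mul_le_mul_of_nonneg_left hQz (by linarith : (0:ℝ) ≤ 1 + β)
        linarith
    _ ≤ (1 + β) * (K * euclNorm u) := by
        have := mul_le_mul_of_nonneg_left hzb (by linarith : (0:ℝ) ≤ 1 + β)
        linarith
    _ = ((1 + β) * K) * euclNorm u := by ring
    _ ≤ 3 * β * euclNorm u := mul_le_mul_of_nonneg_right hfin (enorm_nonneg' u)
end

section
/- Under assumption A1, let ν ∈ (0, 1], x, z ∈ F_p⁰, and μ > 0, with θ = ‖z − x‖_{x,ν} ≤ 1/4. Partition the coordinates as L = {j : x_j ≥ ν}, S = {j : x_j < ν}, and define w ∈ ℝⁿ by w_S = x_S and w_L = z_L (so w > 0), with W = diag(w). Let Δx = −X P_{AX}((1/μ)Xc − e) be the exact primal Newton direction and Δx̃ = −W P_{AW} W X⁻¹((1/μ)Xc − e) the delayed-scaling surrogate direction. Then ‖X⁻¹(Δx − Δx̃)‖ ≤ 3θ δ(x, μ). -/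
open Matrix

/-- The ν-thresholded scaled distance `‖y - z‖_{x,ν}`. -/
noncomputable def tdist {n : ℕ} (x : Fin n → ℝ) (ν : ℝ) (y z : Fin n → ℝ) : ℝ :=
  Real.sqrt (∑ j, if ν ≤ x j then ((y j - z j) / x j) ^ 2 else (y j - z j) ^ 2)

namespace S8

lemma enorm_nonneg {ι : Type*} [Fintype ι] (v : ι → ℝ) : 0 ≤ euclNorm v := Real.sqrt_nonneg _

lemma enorm_sq {ι : Type*} [Fintype ι] (v : ι → ℝ) : euclNorm v ^ 2 = ∑ i, (v i) ^ 2 :=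
  Real.sq_sqrt (Finset.sum_nonneg fun _ _ => sq_nonneg _)

lemma abs_dot_le {ι : Type*} [Fintype ι] (u v : ι → ℝ) : |u ⬝ᵥ v| ≤ euclNorm u * euclNorm v := by
  have h := Finset.sum_mul_sq_le_sq_mul_sq Finset.univ u v
  rw [← Real.sqrt_sq_eq_abs]
  calc Real.sqrt ((u ⬝ᵥ v) ^ 2) ≤ Real.sqrt ((∑ i, u i ^ 2) * ∑ i, v i ^ 2) :=
        Real.sqrt_le_sqrt (by simpa [dotProduct] using h)
    _ = euclNorm u * euclNorm v := by
        rw [Real.sqrt_mul (Finset.sum_nonneg fun i _ => sq_nonneg _)]; rfl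

lemma dot_self_eq_sq {ι : Type*} [Fintype ι] (v : ι → ℝ) : v ⬝ᵥ v = euclNorm v ^ 2 := by
  rw [enorm_sq]; simp [dotProduct, sq]

lemma enorm_neg {ι : Type*} [Fintype ι] (v : ι → ℝ) : euclNorm (-v) = euclNorm v := by
  unfold euclNorm; congr 1; refine Finset.sum_congr rfl fun i _ => ?_
  simp [neg_sq]

lemma enorm_add_le {ι : Type*} [Fintype ι] (u v : ι → ℝ) :
    euclNorm (u + v) ≤ euclNorm u + euclNorm v := by
  have h1 : euclNorm (u + v) ^ 2 ≤ (euclNorm u + euclNorm v) ^ 2 := by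
    rw [enorm_sq]
    have expand : ∑ i, ((u + v) i) ^ 2 = (∑ i, u i ^ 2) + 2 * (u ⬝ᵥ v) + ∑ i, v i ^ 2 := by
      simp only [Pi.add_apply, dotProduct]
      rw [Finset.mul_sum, ← Finset.sum_add_distrib, ← Finset.sum_add_distrib]
      refine Finset.sum_congr rfl fun i _ => by ring
    rw [expand]
    have hd : u ⬝ᵥ v ≤ euclNorm u * euclNorm v := (le_abs_self _).trans (abs_dot_le u v)
    have h2 := enorm_sq u; have h3 := enorm_sq v
    nlinarith
  have h0 : 0 ≤ euclNorm u + euclNorm v := add_nonneg (enorm_nonneg u) (enorm_nonneg v)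
  nlinarith [enorm_nonneg (u + v)]

lemma proj_mulVec_le {ι : Type*} [Fintype ι] [DecidableEq ι] {P : Matrix ι ι ℝ}
    (hsym : Pᵀ = P) (hidem : P * P = P) (v : ι → ℝ) : euclNorm (P *ᵥ v) ≤ euclNorm v := by
  have hdot : (P *ᵥ v) ⬝ᵥ (P *ᵥ v) = (P *ᵥ v) ⬝ᵥ v := by
    rw [Matrix.dotProduct_mulVec, ← Matrix.mulVec_transpose, hsym, Matrix.mulVec_mulVec, hidem]
  have h1 : euclNorm (P *ᵥ v) ^ 2 ≤ euclNorm (P *ᵥ v) * euclNorm v := by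
    rw [← dot_self_eq_sq, hdot]
    exact (le_abs_self _).trans (abs_dot_le _ _)
  rcases eq_or_lt_of_le (enorm_nonneg (P *ᵥ v)) with h | h
  · rw [← h]; exact enorm_nonneg v
  · nlinarith [h1]

lemma pythagoras {ι : Type*} [Fintype ι] {u v : ι → ℝ} (h : u ⬝ᵥ v = 0) :
    euclNorm (u + v) = Real.sqrt (euclNorm u ^ 2 + euclNorm v ^ 2) := by
  unfold euclNorm
  congr 1
  rw [Real.sq_sqrt (Finset.sum_nonneg fun _ _ => sq_nonneg _),
    Real.sq_sqrt (Finset.sum_nonneg fun _ _ => sq_nonneg _), ← Finset.sum_add_distrib]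
  have h' : ∑ i, u i * v i = 0 := h
  have expand : ∀ i : ι, (u i + v i) ^ 2 = (u i ^ 2 + v i ^ 2) + 2 * (u i * v i) := by
    intro i; ring
  simp_rw [Pi.add_apply, expand, Finset.sum_add_distrib, ← Finset.mul_sum, h']
  ring

lemma enorm_diag_mulVec_le {ι : Type*} [Fintype ι] [DecidableEq ι] {d : ι → ℝ} {c : ℝ}
    (hc : 0 ≤ c) (h : ∀ i, |d i| ≤ c) (v : ι → ℝ) :
    euclNorm (Matrix.diagonal d *ᵥ v) ≤ c * euclNorm v := by
  have key : ∑ i, (d i * v i) ^ 2 ≤ c ^ 2 * ∑ i, (v i) ^ 2 := by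
    rw [Finset.mul_sum]
    refine Finset.sum_le_sum fun i _ => ?_
    rw [mul_pow]
    have : d i ^ 2 ≤ c ^ 2 := by
      rw [← sq_abs (d i)]; exact pow_le_pow_left₀ (abs_nonneg _) (h i) 2
    exact mul_le_mul_of_nonneg_right this (sq_nonneg _)
  have h5 : euclNorm (Matrix.diagonal d *ᵥ v) ≤ Real.sqrt (c ^ 2 * ∑ i, (v i) ^ 2) := by
    refine Real.sqrt_le_sqrt ?_
    simpa [Matrix.mulVec_diagonal] using key
  calc euclNorm (Matrix.diagonal d *ᵥ v) ≤ Real.sqrt (c ^ 2 * ∑ i, (v i) ^ 2) := h5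
    _ = c * euclNorm v := by
        rw [Real.sqrt_mul (sq_nonneg _), Real.sqrt_sq hc]; rfl

variable {m n : ℕ} {B : Matrix (Fin m) (Fin n) ℝ}

lemma gradProj_transpose (B : Matrix (Fin m) (Fin n) ℝ) : (gradProj B)ᵀ = gradProj B := by
  unfold gradProj
  rw [transpose_sub, transpose_one]
  congr 1
  rw [transpose_mul, transpose_mul, transpose_transpose, transpose_nonsing_inv,
    transpose_mul, transpose_transpose, Matrix.mul_assoc]

lemma mul_gradProj (hU : IsUnit (B * Bᵀ).det) : B * gradProj B = 0 := by
  unfold gradProj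
  rw [Matrix.mul_sub, Matrix.mul_one, ← Matrix.mul_assoc, ← Matrix.mul_assoc,
    Matrix.mul_nonsing_inv _ hU, Matrix.one_mul, sub_self]

lemma gradProj_mul_transpose (hU : IsUnit (B * Bᵀ).det) : gradProj B * Bᵀ = 0 := by
  have := congrArg Matrix.transpose (mul_gradProj hU)
  rwa [transpose_mul, gradProj_transpose, transpose_zero] at this

lemma gradProj_idem (hU : IsUnit (B * Bᵀ).det) : gradProj B * gradProj B = gradProj B := by
  conv_lhs => rw [show gradProj B * gradProj B =
    gradProj B - (Bᵀ * (B * Bᵀ)⁻¹) * (B * gradProj B) by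
      unfold gradProj
      rw [Matrix.sub_mul, Matrix.one_mul]
      congr 1
      rw [Matrix.mul_assoc (Bᵀ * (B * Bᵀ)⁻¹) B _, Matrix.mul_assoc]]
  rw [mul_gradProj hU, Matrix.mul_zero, sub_zero]

lemma gradProj_mulVec_of_ker {v : Fin n → ℝ}
    (hv : B *ᵥ v = 0) : gradProj B *ᵥ v = v := by
  unfold gradProj
  rw [Matrix.sub_mulVec, Matrix.one_mulVec, ← Matrix.mulVec_mulVec, hv,
    Matrix.mulVec_zero, sub_zero]

lemma mulVec_gradProj_zero (hU : IsUnit (B * Bᵀ).det) (v : Fin n → ℝ) :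
    B *ᵥ (gradProj B *ᵥ v) = 0 := by
  rw [Matrix.mulVec_mulVec, mul_gradProj hU, Matrix.zero_mulVec]

lemma gradProj_mulVec_transpose_zero (hU : IsUnit (B * Bᵀ).det) (u : Fin m → ℝ) :
    gradProj B *ᵥ (Bᵀ *ᵥ u) = 0 := by
  rw [Matrix.mulVec_mulVec, gradProj_mul_transpose hU, Matrix.zero_mulVec]

lemma transpose_mulVec_injective {A : Matrix (Fin m) (Fin n) ℝ} (hrank : A.rank = m) :
    ∀ v : Fin m → ℝ, Aᵀ *ᵥ v = 0 → v = 0 := by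
  have hr : Aᵀ.rank = m := by rw [Matrix.rank_transpose]; exact hrank
  have hker : LinearMap.ker Aᵀ.mulVecLin = ⊥ := by
    have h1 := LinearMap.finrank_range_add_finrank_ker Aᵀ.mulVecLin
    have h2 : Module.finrank ℝ (Fin m → ℝ) = m := by simp
    rw [h2] at h1
    have h3 : Module.finrank ℝ (LinearMap.range Aᵀ.mulVecLin) = m := hr
    have h4 : Module.finrank ℝ (LinearMap.ker Aᵀ.mulVecLin) = 0 := by omega
    exact Submodule.finrank_eq_zero.mp h4
  intro v hv
  have := LinearMap.ker_eq_bot.mp hker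
  exact this (by simpa [← Matrix.mulVec_transpose] using hv)

lemma normal_posdef {A : Matrix (Fin m) (Fin n) ℝ} (hrank : A.rank = m)
    {w : Fin n → ℝ} (hw : ∀ i, 0 < w i) :
    ((A * Matrix.diagonal w) * (A * Matrix.diagonal w)ᵀ).PosDef := by
  set B := A * Matrix.diagonal w with hB
  rw [Matrix.posDef_iff_dotProduct_mulVec]
  constructor
  · have := Matrix.isHermitian_mul_conjTranspose_self B
    rwa [Matrix.conjTranspose_eq_transpose_of_trivial] at this
  · intro x hx
    have hdot : x ⬝ᵥ ((B * Bᵀ) *ᵥ x) = (Bᵀ *ᵥ x) ⬝ᵥ (Bᵀ *ᵥ x) := by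
      rw [← Matrix.mulVec_mulVec, Matrix.dotProduct_mulVec, ← Matrix.mulVec_transpose]
    have hne : Bᵀ *ᵥ x ≠ 0 := by
      intro hzero
      have hBt : Bᵀ = Matrix.diagonal w * Aᵀ := by
        rw [hB, Matrix.transpose_mul, Matrix.diagonal_transpose]
      rw [hBt, ← Matrix.mulVec_mulVec] at hzero
      have hAx : Aᵀ *ᵥ x = 0 := by
        funext j
        have := congrFun hzero j
        simp only [Matrix.mulVec_diagonal, Pi.zero_apply] at this
        exact (mul_eq_zero.mp this).resolve_left (ne_of_gt (hw j))
      exact hx (transpose_mulVec_injective hrank x hAx)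
    have hpos : 0 < (Bᵀ *ᵥ x) ⬝ᵥ (Bᵀ *ᵥ x) := by
      have hnn : 0 ≤ (Bᵀ *ᵥ x) ⬝ᵥ (Bᵀ *ᵥ x) :=
        Finset.sum_nonneg fun i _ => mul_self_nonneg _
      rcases hnn.eq_or_lt with h | h
      · exact absurd ((dotProduct_self_eq_zero).mp h.symm) hne
      · exact h
    simpa [hdot] using hpos

lemma normal_isUnit {A : Matrix (Fin m) (Fin n) ℝ} (hrank : A.rank = m)
    {w : Fin n → ℝ} (hw : ∀ i, 0 < w i) :
    IsUnit (((A * Matrix.diagonal w) * (A * Matrix.diagonal w)ᵀ)).det :=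
  isUnit_iff_ne_zero.mpr (normal_posdef hrank hw).det_pos.ne'

lemma sqrt_bound {a1 a2 th dl : ℝ} (hth : 0 ≤ th) (hdl : 0 ≤ dl) (e1 : 0 ≤ a1) (e2 : 0 ≤ a2)
    (h1 : a1 ≤ th * dl) (h2 : a2 ≤ th * (4 / 3 * dl)) :
    Real.sqrt (a1 ^ 2 + a2 ^ 2) ≤ 5 / 3 * (th * dl) := by
  have h0 : 0 ≤ th * dl := mul_nonneg hth hdl
  have hsum : a1 ^ 2 + a2 ^ 2 ≤ (5 / 3 * (th * dl)) ^ 2 := by nlinarith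
  calc Real.sqrt (a1 ^ 2 + a2 ^ 2) ≤ Real.sqrt ((5 / 3 * (th * dl)) ^ 2) :=
        Real.sqrt_le_sqrt hsum
    _ = 5 / 3 * (th * dl) := Real.sqrt_sq (by positivity)

lemma final_bound {b1 b2 b3 th dl : ℝ} (hth : 0 ≤ th) (hdl : 0 ≤ dl) (hth4 : th ≤ 1 / 4)
    (htri : b3 ≤ b1 + b2) (h1 : b1 ≤ 5 / 3 * (th * dl)) (h2 : b2 ≤ th * ((1 + th) * dl)) :
    b3 ≤ 3 * th * dl := by
  nlinarith [mul_nonneg hth hdl, mul_nonneg (mul_nonneg hth hth) hdl]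

end S8

/-- the delayed-scaling surrogate direction approximates the exact
primal Newton direction in the scaled norm. -/
theorem stmt_8 {m n : ℕ} (A : Matrix (Fin m) (Fin n) ℝ) (b : Fin m → ℝ) (c : Fin n → ℝ)
    -- Assumption A1: nonempty primal and dual interiors, full row rank
    (hrank : A.rank = m)
    (hFp0 : ∃ x0 : Fin n → ℝ, A *ᵥ x0 = b ∧ ∀ i, 0 < x0 i)
    (hFd0 : ∃ (y0 : Fin m → ℝ) (s0 : Fin n → ℝ), Aᵀ *ᵥ y0 + s0 = c ∧ ∀ i, 0 < s0 i)
    (ν : ℝ) (hν0 : 0 < ν) (hν1 : ν ≤ 1)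
    (μ : ℝ) (hμ : 0 < μ)
    (x z : Fin n → ℝ)
    (hxfeas : A *ᵥ x = b) (hxpos : ∀ i, 0 < x i)
    (hzfeas : A *ᵥ z = b) (hzpos : ∀ i, 0 < z i)
    (hθ : tdist x ν z x ≤ 1 / 4)
    (w : Fin n → ℝ) (hw : w = fun j => if ν ≤ x j then z j else x j)
    (Δx Δxtil : Fin n → ℝ)
    (hΔx : Δx = -(Matrix.diagonal x *ᵥ (gradProj (A * Matrix.diagonal x) *ᵥ
        (μ⁻¹ • (Matrix.diagonal x *ᵥ c) - 1))))
    (hΔxtil : Δxtil = -(Matrix.diagonal w *ᵥ (gradProj (A * Matrix.diagonal w) *ᵥ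
        ((Matrix.diagonal w * (Matrix.diagonal x)⁻¹) *ᵥ
          (μ⁻¹ • (Matrix.diagonal x *ᵥ c) - 1))))) :
    euclNorm ((Matrix.diagonal x)⁻¹ *ᵥ (Δx - Δxtil)) ≤ 3 * tdist x ν z x * prox A c x μ := by
  clear hFp0 hFd0 hxfeas hzfeas
  have hθ0 : 0 ≤ tdist x ν z x := Real.sqrt_nonneg _
  set θ := tdist x ν z x with hθdef
  have hδdef : prox A c x μ = euclNorm (gradProj (A * Matrix.diagonal x) *ᵥ
      (μ⁻¹ • (Matrix.diagonal x *ᵥ c) - 1)) := rfl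
  set g : Fin n → ℝ := μ⁻¹ • (Matrix.diagonal x *ᵥ c) - 1 with hgdef
  set q : Fin n → ℝ := gradProj (A * Matrix.diagonal x) *ᵥ g with hqdef
  set δ := euclNorm q with hδ
  have hδ0 : 0 ≤ δ := S8.enorm_nonneg q
  have hwpos : ∀ j, 0 < w j := by
    intro j; rw [hw]; dsimp only
    split
    · exact hzpos j
    · exact hxpos j
  have hxne : ∀ j, x j ≠ 0 := fun j => (hxpos j).ne'
  have hwne : ∀ j, w j ≠ 0 := fun j => (hwpos j).ne'
  set d : Fin n → ℝ := fun j => w j / x j with hddef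
  set ee : Fin n → ℝ := fun j => d j - 1 with heedef
  set dinv : Fin n → ℝ := fun j => x j / w j with hdinvdef
  have hUx := S8.normal_isUnit hrank hxpos
  have hUw := S8.normal_isUnit hrank hwpos
  set Q := gradProj (A * Matrix.diagonal w) with hQdef
  have hQsym : Qᵀ = Q := S8.gradProj_transpose _
  have hQidem : Q * Q = Q := S8.gradProj_idem hUw
  have hθsq : θ ^ 2 = ∑ j, if ν ≤ x j then ((z j - x j) / x j) ^ 2 else (z j - x j) ^ 2 := by
    rw [hθdef]; unfold tdist
    exact Real.sq_sqrt (Finset.sum_nonneg fun i _ => by positivity)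
  -- entrywise bounds
  have habs_e : ∀ j, |ee j| ≤ θ := by
    intro j
    by_cases hj : ν ≤ x j
    · have hwj : w j = z j := by rw [hw]; simp [hj]
      have hsq : (ee j) ^ 2 ≤ θ ^ 2 := by
        have hterm : ee j = (z j - x j) / x j := by
          rw [heedef]; dsimp only
          rw [hddef]; dsimp only
          rw [hwj, div_sub_one (hxne j)]
        rw [hterm, hθsq]
        have := Finset.single_le_sum
          (f := fun i => if ν ≤ x i then ((z i - x i) / x i) ^ 2 else (z i - x i) ^ 2)
          (fun i _ => by positivity) (Finset.mem_univ j)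
        simpa [hj] using this
      have := Real.sqrt_le_sqrt hsq
      rwa [Real.sqrt_sq_eq_abs, Real.sqrt_sq hθ0] at this
    · have hwj : w j = x j := by rw [hw]; simp [hj]
      have : ee j = 0 := by
        rw [heedef]; dsimp only; rw [hddef]; dsimp only; rw [hwj]
        rw [div_self (hxne j)]; ring
      rw [this]; simpa using hθ0
  have habs_d : ∀ j, |d j| ≤ 1 + θ := by
    intro j
    have hde : d j = 1 + ee j := by rw [heedef]; ring
    rw [hde]
    calc |1 + ee j| ≤ |1| + |ee j| := abs_add_le _ _
      _ ≤ 1 + θ := by rw [abs_one]; linarith [habs_e j]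
  have hdpos : ∀ j, 0 < d j := fun j => div_pos (hwpos j) (hxpos j)
  have hd_lb : ∀ j, 3 / 4 ≤ d j := by
    intro j
    have h1 : -θ ≤ ee j := neg_le_of_abs_le (habs_e j)
    have hde : d j = 1 + ee j := by rw [heedef]; ring
    rw [hde]; linarith
  have habs_dinv : ∀ j, |dinv j| ≤ 4 / 3 := by
    intro j
    have h1 : dinv j = (d j)⁻¹ := by
      rw [hdinvdef]; dsimp only; rw [hddef]; dsimp only
      rw [inv_div]
    have h2 : (d j)⁻¹ ≤ 4 / 3 := by
      rw [show (4 : ℝ) / 3 = ((3 : ℝ) / 4)⁻¹ by norm_num]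
      exact inv_anti₀ (by norm_num) (hd_lb j)
    rw [h1, abs_of_pos (inv_pos.mpr (hdpos j))]
    exact h2
  -- (diagonal x)⁻¹
  have hXinv : (Matrix.diagonal x)⁻¹ = Matrix.diagonal (fun j => (x j)⁻¹) := by
    refine Matrix.inv_eq_left_inv ?_
    rw [Matrix.diagonal_mul_diagonal]
    have hone : (fun j => (x j)⁻¹ * x j) = fun _ => (1 : ℝ) := by
      funext j; exact inv_mul_cancel₀ (hxne j)
    rw [hone, Matrix.diagonal_one]
  have hDg : Matrix.diagonal w * (Matrix.diagonal x)⁻¹ = Matrix.diagonal d := by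
    rw [hXinv, Matrix.diagonal_mul_diagonal, hddef]
    simp [div_eq_mul_inv]
  -- key kernel facts
  set Bx := A * Matrix.diagonal x with hBx
  set u0 : Fin m → ℝ := (Bx * Bxᵀ)⁻¹ *ᵥ (Bx *ᵥ g) with hu0
  have hgq : g - q = Bxᵀ *ᵥ u0 := by
    rw [hqdef, hu0]
    show g - gradProj Bx *ᵥ g = _
    unfold gradProj
    rw [Matrix.sub_mulVec, Matrix.one_mulVec, sub_sub_cancel,
      ← Matrix.mulVec_mulVec, ← Matrix.mulVec_mulVec]
  have hBxT : Bxᵀ *ᵥ u0 = Matrix.diagonal x *ᵥ (Aᵀ *ᵥ u0) := by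
    rw [hBx, Matrix.transpose_mul, Matrix.diagonal_transpose, ← Matrix.mulVec_mulVec]
  have hBwT : (A * Matrix.diagonal w)ᵀ *ᵥ u0 = Matrix.diagonal w *ᵥ (Aᵀ *ᵥ u0) := by
    rw [Matrix.transpose_mul, Matrix.diagonal_transpose, ← Matrix.mulVec_mulVec]
  have hQdg : Q *ᵥ (Matrix.diagonal d *ᵥ g) = Q *ᵥ (Matrix.diagonal d *ᵥ q) := by
    have hstep : Matrix.diagonal d *ᵥ (g - q) = (A * Matrix.diagonal w)ᵀ *ᵥ u0 := by
      rw [hgq, hBxT, hBwT]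
      funext j
      simp only [Matrix.mulVec_diagonal]
      rw [hddef]; dsimp only
      field_simp [hxne j]
    have hzero : Q *ᵥ (Matrix.diagonal d *ᵥ (g - q)) = 0 := by
      rw [hstep, hQdef]
      exact S8.gradProj_mulVec_transpose_zero hUw _
    rw [Matrix.mulVec_sub, Matrix.mulVec_sub] at hzero
    exact sub_eq_zero.mp hzero
  -- kernel fact for dinv q
  have hKer : (A * Matrix.diagonal w) *ᵥ (Matrix.diagonal dinv *ᵥ q) = 0 := by
    have h1 : Matrix.diagonal w *ᵥ (Matrix.diagonal dinv *ᵥ q) = Matrix.diagonal x *ᵥ q := by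
      funext j
      simp only [Matrix.mulVec_diagonal]
      rw [hdinvdef]; dsimp only
      field_simp [hwne j]
    rw [← Matrix.mulVec_mulVec, h1, Matrix.mulVec_mulVec]
    rw [hqdef, ← hBx]
    exact S8.mulVec_gradProj_zero hUx g
  have hK : Q *ᵥ (Matrix.diagonal dinv *ᵥ q) = Matrix.diagonal dinv *ᵥ q :=
    S8.gradProj_mulVec_of_ker hKer
  -- goal vector identity
  set t : Fin n → ℝ := Q *ᵥ (Matrix.diagonal d *ᵥ q) with ht
  have hgoalvec : (Matrix.diagonal x)⁻¹ *ᵥ (Δx - Δxtil) = Matrix.diagonal d *ᵥ t - q := by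
    rw [hΔx, hΔxtil, hDg, hQdg, hXinv]
    funext j
    simp only [Matrix.mulVec_diagonal, Pi.sub_apply, Pi.neg_apply]
    rw [hddef]; dsimp only
    field_simp [hxne j]
    ring
  -- decomposition
  have hEq1 : Matrix.diagonal ee *ᵥ (Matrix.diagonal dinv *ᵥ q) = q - Matrix.diagonal dinv *ᵥ q := by
    funext j
    simp only [Matrix.mulVec_diagonal, Pi.sub_apply]
    rw [heedef, hdinvdef, hddef]; dsimp only
    field_simp [hxne j, hwne j]
  have hDd : ∀ v : Fin n → ℝ, Matrix.diagonal d *ᵥ v = v + Matrix.diagonal ee *ᵥ v := by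
    intro v; funext j
    simp only [Matrix.mulVec_diagonal, Pi.add_apply]
    rw [heedef]; dsimp only
    ring
  set u1 : Fin n → ℝ := Q *ᵥ (Matrix.diagonal ee *ᵥ q) with hu1
  set u2 : Fin n → ℝ := (1 - Q) *ᵥ (Matrix.diagonal ee *ᵥ (Matrix.diagonal dinv *ᵥ q)) with hu2
  set u3 : Fin n → ℝ := Matrix.diagonal ee *ᵥ t with hu3
  have hu2' : u2 = q - Q *ᵥ q := by
    rw [hu2, hEq1, Matrix.mulVec_sub, Matrix.sub_mulVec, Matrix.sub_mulVec,
      Matrix.one_mulVec, Matrix.one_mulVec, hK]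
    abel
  have hdecomp : Matrix.diagonal d *ᵥ t - q = (u1 - u2) + u3 := by
    rw [hDd t, hu3, hu2', hu1, ht, hDd q, Matrix.mulVec_add]
    abel
  clear_value θ δ g q d ee dinv Q Bx u0 t u1 u2 u3
  -- norm bounds
  have hn_eq : euclNorm (Matrix.diagonal ee *ᵥ q) ≤ θ * δ := by
    rw [hδ]; exact S8.enorm_diag_mulVec_le hθ0 habs_e q
  have hn1 : euclNorm u1 ≤ θ * δ := by
    rw [hu1]
    exact le_trans (S8.proj_mulVec_le hQsym hQidem _) hn_eq
  have hn_dinv : euclNorm (Matrix.diagonal dinv *ᵥ q) ≤ 4 / 3 * δ := by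
    rw [hδ]; exact S8.enorm_diag_mulVec_le (by norm_num) habs_dinv q
  have hsym2 : (1 - Q)ᵀ = 1 - Q := by rw [Matrix.transpose_sub, Matrix.transpose_one, hQsym]
  have hQzero : (1 - Q) * Q = 0 := by rw [Matrix.sub_mul, Matrix.one_mul, hQidem, sub_self]
  have hidem2 : (1 - Q) * (1 - Q) = 1 - Q := by
    rw [Matrix.mul_sub, hQzero, sub_zero, Matrix.mul_one]
  have hn2 : euclNorm u2 ≤ θ * (4 / 3 * δ) := by
    rw [hu2]
    refine le_trans (S8.proj_mulVec_le hsym2 hidem2 _) ?_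
    calc euclNorm (Matrix.diagonal ee *ᵥ (Matrix.diagonal dinv *ᵥ q))
        ≤ θ * euclNorm (Matrix.diagonal dinv *ᵥ q) := S8.enorm_diag_mulVec_le hθ0 habs_e _
      _ ≤ θ * (4 / 3 * δ) := mul_le_mul_of_nonneg_left hn_dinv hθ0
  have hn3 : euclNorm u3 ≤ θ * ((1 + θ) * δ) := by
    rw [hu3]
    calc euclNorm (Matrix.diagonal ee *ᵥ t) ≤ θ * euclNorm t := S8.enorm_diag_mulVec_le hθ0 habs_e t
      _ ≤ θ * ((1 + θ) * δ) := by
          refine mul_le_mul_of_nonneg_left ?_ hθ0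
          rw [ht]
          refine le_trans (S8.proj_mulVec_le hQsym hQidem _) ?_
          rw [hδ]
          exact S8.enorm_diag_mulVec_le (by linarith) habs_d q
  -- orthogonality
  have horth0 : u1 ⬝ᵥ u2 = 0 := by
    have h1 : u1 ⬝ᵥ u2 = ((1 - Q)ᵀ *ᵥ u1) ⬝ᵥ (Matrix.diagonal ee *ᵥ (Matrix.diagonal dinv *ᵥ q)) := by
      rw [hu2, Matrix.dotProduct_mulVec, ← Matrix.mulVec_transpose]
    have h2 : (1 - Q)ᵀ *ᵥ u1 = 0 := by
      rw [hsym2, hu1, Matrix.mulVec_mulVec, hQzero, Matrix.zero_mulVec]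
    rw [h1, h2, zero_dotProduct]
  have horth : u1 ⬝ᵥ (-u2) = 0 := by
    rw [dotProduct_neg, horth0, neg_zero]
  have hpyth : euclNorm (u1 - u2) = Real.sqrt (euclNorm u1 ^ 2 + euclNorm (-u2) ^ 2) := by
    rw [sub_eq_add_neg]
    exact S8.pythagoras horth
  have hn12 : euclNorm (u1 - u2) ≤ 5 / 3 * (θ * δ) := by
    rw [hpyth, S8.enorm_neg]
    exact S8.sqrt_bound hθ0 hδ0 (S8.enorm_nonneg u1) (S8.enorm_nonneg u2) hn1 hn2
  -- finish
  rw [hgoalvec, hdecomp, hδdef]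
  exact S8.final_bound hθ0 hδ0 hθ (S8.enorm_add_le _ _) hn12 hn3
end

section
/- Under assumption A1, for any μ > 0 and τ ∈ (0, 1), the central path point x^{(1−τ)μ} at the reduced barrier parameter (1−τ)μ satisfies δ(x^{(1−τ)μ}, μ) ≤ τ√n. -/
open Matrix

lemma orth_range {m n : ℕ} (A : Matrix (Fin m) (Fin n) ℝ) (v : Fin n → ℝ)
    (hv : ∀ d : Fin n → ℝ, A *ᵥ d = 0 → v ⬝ᵥ d = 0) :
    ∃ y : Fin m → ℝ, Aᵀ *ᵥ y = v := by
  classical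
  let W : Submodule ℝ (EuclideanSpace ℝ (Fin n)) :=
    LinearMap.range (Matrix.toEuclideanLin Aᵀ)
  have hWperp : ∀ w : EuclideanSpace ℝ (Fin n), w ∈ Wᗮ ↔ A *ᵥ w.ofLp = 0 := by
    intro w
    constructor
    · intro hw
      have h := fun y : Fin m → ℝ => hw (Matrix.toEuclideanLin Aᵀ (WithLp.toLp 2 y)) ⟨_, rfl⟩
      funext i
      have h2 := h (fun j => (A *ᵥ w.ofLp) j)
      simp only [PiLp.inner_apply, RCLike.inner_apply, conj_trivial] at h2
      have : (A *ᵥ w.ofLp) ⬝ᵥ (A *ᵥ w.ofLp) = 0 := by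
        rw [dotProduct_mulVec, ← Matrix.mulVec_transpose]
        simpa [dotProduct, mul_comm, Matrix.toEuclideanLin_apply] using h2
      have hz := dotProduct_self_eq_zero.mp this
      exact congrFun hz i
    · intro hw u hu
      obtain ⟨y, rfl⟩ := hu
      simp only [PiLp.inner_apply, RCLike.inner_apply, conj_trivial]
      have : y.ofLp ⬝ᵥ (A *ᵥ w.ofLp) = 0 := by rw [hw]; simp
      rw [dotProduct_mulVec, ← Matrix.mulVec_transpose] at this
      simpa [dotProduct, Matrix.toEuclideanLin_apply, mul_comm] using this
  have hvW : (WithLp.toLp 2 v : EuclideanSpace ℝ (Fin n)) ∈ Wᗮᗮ := by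
    intro w hw
    have := hv w.ofLp ((hWperp w).mp hw)
    simp only [PiLp.inner_apply, RCLike.inner_apply, conj_trivial]
    simpa [dotProduct, mul_comm] using this
  rw [Submodule.orthogonal_orthogonal] at hvW
  obtain ⟨y, hy⟩ := hvW
  refine ⟨y.ofLp, ?_⟩
  have := congrArg WithLp.ofLp hy
  simpa [Matrix.toEuclideanLin_apply] using this

/-- proximity of the central path point at the reduced barrier
parameter `(1-τ)μ` with respect to parameter `μ`. -/
theorem stmt_16 {m n : ℕ} (A : Matrix (Fin m) (Fin n) ℝ) (b : Fin m → ℝ) (c : Fin n → ℝ)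
    -- Assumption A1: nonempty primal and dual interiors, full row rank
    (hrank : A.rank = m)
    (hFp0 : ∃ x0 : Fin n → ℝ, A *ᵥ x0 = b ∧ ∀ i, 0 < x0 i)
    (hFd0 : ∃ (y0 : Fin m → ℝ) (s0 : Fin n → ℝ), Aᵀ *ᵥ y0 + s0 = c ∧ ∀ i, 0 < s0 i)
    (μ : ℝ) (hμ : 0 < μ)
    (τ : ℝ) (hτ0 : 0 < τ) (hτ1 : τ < 1)
    -- the central path point x^((1-τ)μ)
    (xnu : Fin n → ℝ) (hxnufeas : A *ᵥ xnu = b) (hxnupos : ∀ i, 0 < xnu i)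
    (hxnumin : ∀ x' : Fin n → ℝ, A *ᵥ x' = b → (∀ i, 0 < x' i) →
      c ⬝ᵥ xnu - (1 - τ) * μ * ∑ i, Real.log (xnu i)
        ≤ c ⬝ᵥ x' - (1 - τ) * μ * ∑ i, Real.log (x' i)) :
    proxMin A c xnu μ ≤ τ * Real.sqrt n := by
  classical
  unfold proxMin
  set ν : ℝ := (1 - τ) * μ with hνdef
  have hν : 0 < ν := mul_pos (by linarith) hμ
  set s : Fin n → ℝ := fun i => ν * (xnu i)⁻¹ with hsdef
  have hspos : ∀ i, 0 < s i := fun i => mul_pos hν (inv_pos.mpr (hxnupos i))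
  -- KKT: (c - s) is orthogonal to ker A
  have key : ∀ d : Fin n → ℝ, A *ᵥ d = 0 → (c - s) ⬝ᵥ d = 0 := by
    intro d hd
    set g : ℝ → ℝ := fun t =>
      c ⬝ᵥ xnu + t * (c ⬝ᵥ d) - ν * ∑ i, Real.log (xnu i + t * d i) with hgdef
    have hpos : ∀ᶠ t in nhds (0:ℝ), ∀ i, 0 < xnu i + t * d i := by
      rw [Filter.eventually_all]
      intro i
      have hcont : Continuous fun t : ℝ => xnu i + t * d i := by continuity
      have : IsOpen {t : ℝ | 0 < xnu i + t * d i} :=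
        isOpen_lt continuous_const hcont
      exact this.mem_nhds (by simpa using hxnupos i)
    have hmin : IsLocalMin g 0 := by
      filter_upwards [hpos] with t ht
      have hfeas : A *ᵥ (xnu + t • d) = b := by
        simp [Matrix.mulVec_add, Matrix.mulVec_smul, hd, hxnufeas]
      have hpos' : ∀ i, 0 < (xnu + t • d) i := by
        intro i; simpa [mul_comm] using ht i
      have := hxnumin (xnu + t • d) hfeas hpos'
      have hdp : c ⬝ᵥ (xnu + t • d) = c ⬝ᵥ xnu + t * (c ⬝ᵥ d) := by
        simp [dotProduct_add, dotProduct_smul, smul_eq_mul]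
      simp only [hgdef]
      simp only [hdp, Pi.add_apply, Pi.smul_apply, smul_eq_mul] at this
      calc c ⬝ᵥ xnu + 0 * (c ⬝ᵥ d) - ν * ∑ i, Real.log (xnu i + 0 * d i)
          = c ⬝ᵥ xnu - ν * ∑ i, Real.log (xnu i) := by simp
        _ ≤ c ⬝ᵥ xnu + t * (c ⬝ᵥ d) - ν * ∑ i, Real.log (xnu i + t * d i) := by
            have := this
            simp only [hνdef] at *
            convert this using 3 <;> ring_nf
    have hderiv : HasDerivAt g (c ⬝ᵥ d - ν * ∑ i, (xnu i)⁻¹ * d i) 0 := by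
      have h1 : HasDerivAt (fun t : ℝ => c ⬝ᵥ xnu + t * (c ⬝ᵥ d)) (c ⬝ᵥ d) 0 := by
        simpa using (hasDerivAt_mul_const (c ⬝ᵥ d)).const_add (c ⬝ᵥ xnu)
      have h2 : HasDerivAt (fun t : ℝ => ∑ i, Real.log (xnu i + t * d i))
          (∑ i, (xnu i)⁻¹ * d i) 0 := by
        apply HasDerivAt.fun_sum
        intro i _
        have hlin : HasDerivAt (fun t : ℝ => xnu i + t * d i) (d i) 0 := by
          simpa using (hasDerivAt_mul_const (d i)).const_add (xnu i)
        have hne : xnu i + 0 * d i ≠ 0 := by simpa using (hxnupos i).ne'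
        have := (Real.hasDerivAt_log hne).comp 0 hlin
        simpa [Function.comp_def] using this
      exact h1.sub (h2.const_mul ν)
    have hzero := hmin.hasDerivAt_eq_zero hderiv
    have heq : (c - s) ⬝ᵥ d = c ⬝ᵥ d - ν * ∑ i, (xnu i)⁻¹ * d i := by
      simp only [dotProduct, Pi.sub_apply, sub_mul, Finset.sum_sub_distrib,
        Finset.mul_sum, hsdef]
      congr 1
      exact Finset.sum_congr rfl fun i _ => by ring
    rw [heq, hzero]
  obtain ⟨y, hy⟩ := orth_range A (c - s) key
  have hfeas : Aᵀ *ᵥ y + s = c := by rw [hy]; simp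
  have hcomp : ∀ i, (μ⁻¹ • (Matrix.diagonal xnu *ᵥ s) - 1) i = -τ := by
    intro i
    have hx : xnu i ≠ 0 := (hxnupos i).ne'
    simp only [Pi.sub_apply, Pi.smul_apply, Pi.one_apply, smul_eq_mul,
      Matrix.mulVec_diagonal, hsdef, hνdef]
    field_simp
    ring
  have hnorm : euclNorm (μ⁻¹ • (Matrix.diagonal xnu *ᵥ s) - 1) = τ * Real.sqrt n := by
    unfold euclNorm
    have hsq : ∀ i, ((μ⁻¹ • (Matrix.diagonal xnu *ᵥ s) - 1) i) ^ 2 = τ ^ 2 := by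
      intro i; rw [hcomp i]; ring
    rw [Finset.sum_congr rfl fun i _ => hsq i]
    rw [Finset.sum_const, Finset.card_univ, Fintype.card_fin, nsmul_eq_mul]
    rw [Real.sqrt_mul (by positivity), Real.sqrt_sq hτ0.le]
    exact mul_comm _ _
  apply csInf_le
  · exact ⟨0, fun r hr => by
      obtain ⟨y', s', _, _, rfl⟩ := hr
      exact Real.sqrt_nonneg _⟩
  · exact ⟨y, s, hfeas, fun i => (hspos i).le, hnorm.symm⟩
end
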